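/- arXiv:1703.10380 — 7 statements merged into one kernel-verified Lean document; each statement's English description precedes it below -/
import Mathlib

section
/- Let G be a simple undirected graph with n ≥ 1 vertices and m edges, let k ≥ 1 be an integer, and let ⪯ be any total order on the vertices of G. Then the number of ⪯-capped k-walks in G is at least n · (m/(2n))^k. -/
set_option linter.unusedSectionVars false

open Finset

/-- The set of `⪯`-capped `k`-walks in `G` (with respect to the order `le`):
walks `(x_0, …, x_k)` such that `x_i ⪯ x_0` for all `i = 1, …, k`. -/
def cappedWalks {V : Type*} (G : SimpleGraph V) (le : V → V → Prop) (k : ℕ) :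
    Set (Fin (k + 1) → V) :=
  {w | (∀ i : Fin k, G.Adj (w i.castSucc) (w i.succ)) ∧ ∀ i, le (w i) (w 0)}

namespace CappedProof

variable {V : Type*} [Fintype V] [DecidableEq V] [LinearOrder V]
variable (G : SimpleGraph V) [DecidableRel G.Adj]

def IsWit (D S : Finset V) : Prop :=
  S ⊆ D ∧ ∀ y ∈ S, G.edgeFinset.card ≤ 2 * Fintype.card V * (G.neighborFinset y ∩ S).card

instance (D S : Finset V) : Decidable (IsWit G D S) := by unfold IsWit; infer_instance

def K (D : Finset V) : Finset V := (D.powerset.filter (IsWit G D)).sup id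

lemma K_subset (D : Finset V) : K G D ⊆ D := by
  have : K G D ≤ D := Finset.sup_le (fun S hS =>
    Finset.le_iff_subset.2 (Finset.mem_powerset.1 (Finset.mem_filter.1 hS).1))
  exact this

lemma subset_K {D S : Finset V} (h : IsWit G D S) : S ⊆ K G D := by
  have : S ≤ K G D := Finset.le_sup (f := id) (Finset.mem_filter.2 ⟨Finset.mem_powerset.2 h.1, h⟩)
  exact this

lemma mem_K_iff {D : Finset V} {y : V} : y ∈ K G D ↔ ∃ S, IsWit G D S ∧ y ∈ S := by
  constructor
  · intro hy
    rcases Finset.mem_sup.1 hy with ⟨S, hS, hyS⟩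
    exact ⟨S, (Finset.mem_filter.1 hS).2, hyS⟩
  · rintro ⟨S, hS, hyS⟩
    exact subset_K G hS hyS

lemma K_wit (D : Finset V) : IsWit G D (K G D) := by
  refine ⟨K_subset G D, ?_⟩
  intro y hy
  rcases (mem_K_iff G).1 hy with ⟨S, hS, hyS⟩
  refine le_trans (hS.2 y hyS) ?_
  exact Nat.mul_le_mul_left _ (Finset.card_le_card (by
    intro x hx
    rcases Finset.mem_inter.1 hx with ⟨h1, h2⟩
    exact Finset.mem_inter.2 ⟨h1, subset_K G hS h2⟩))

lemma K_mono {D D' : Finset V} (h : D ⊆ D') : K G D ⊆ K G D' :=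
  subset_K G ⟨(K_subset G D).trans h, (K_wit G D).2⟩

/-- A valid "coring deletion order" for `D \ K D`. -/
lemma exists_delList (D : Finset V) : ∃ l : List V, l.toFinset = D \ K G D ∧
    ∀ pre z post, l = pre ++ z :: post →
      2 * Fintype.card V * ((G.neighborFinset z ∩ (K G D ∪ post.toFinset)).card)
        < G.edgeFinset.card := by
  induction D using Finset.strongInduction with
  | _ D ih =>
    by_cases hX : D \ K G D = ∅
    · refine ⟨[], by simp [hX], ?_⟩
      intro pre z post h
      exact absurd h (by simp)
    · -- there is a deletable vertex z₀ ∈ D \ K D with small degree in D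
      have hz : ∃ z₀ ∈ D \ K G D,
          2 * Fintype.card V * ((G.neighborFinset z₀ ∩ D).card) < G.edgeFinset.card := by
        by_contra hcon
        push_neg at hcon
        have hwit : IsWit G D D := by
          refine ⟨Finset.Subset.refl D, ?_⟩
          intro y hy
          by_cases hyK : y ∈ K G D
          · refine le_trans ((K_wit G D).2 y hyK) ?_
            exact Nat.mul_le_mul_left _ (Finset.card_le_card
              (Finset.inter_subset_inter (Finset.Subset.refl _) (K_subset G D)))
          · exact hcon y (Finset.mem_sdiff.2 ⟨hy, hyK⟩)
        exact hX (Finset.sdiff_eq_empty_iff_subset.2 (subset_K G hwit))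
      obtain ⟨z₀, hz₀X, hz₀deg⟩ := hz
      have hz₀D : z₀ ∈ D := (Finset.mem_sdiff.1 hz₀X).1
      have hz₀K : z₀ ∉ K G D := (Finset.mem_sdiff.1 hz₀X).2
      set D' := D.erase z₀ with hD'
      have hss : D' ⊂ D := Finset.erase_ssubset hz₀D
      have hKeq : K G D' = K G D := by
        apply Finset.Subset.antisymm
        · exact K_mono G (Finset.erase_subset _ _)
        · exact subset_K G ⟨Finset.subset_erase.2 ⟨K_subset G D, hz₀K⟩, (K_wit G D).2⟩
      obtain ⟨l', hl'fin, hl'prop⟩ := ih D' hss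
      refine ⟨z₀ :: l', ?_, ?_⟩
      · rw [List.toFinset_cons, hl'fin, hKeq]
        ext x
        simp only [Finset.mem_insert, Finset.mem_sdiff, Finset.mem_erase, hD']
        constructor
        · rintro (rfl | ⟨⟨_, hx⟩, hk⟩)
          · exact ⟨hz₀D, hz₀K⟩
          · exact ⟨hx, hk⟩
        · rintro ⟨hxD, hxK⟩
          by_cases hx : x = z₀
          · exact Or.inl hx
          · exact Or.inr ⟨⟨hx, hxD⟩, hxK⟩
      · intro pre z post h
        match pre, h with
        | [], h =>
          have hz : z = z₀ := by injection h with h1 _; exact h1.symm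
          have hpost : post = l' := by injection h with _ h2; exact h2.symm
          subst hz; subst hpost
          refine lt_of_le_of_lt ?_ hz₀deg
          apply Nat.mul_le_mul_left
          apply Finset.card_le_card
          apply Finset.inter_subset_inter (Finset.Subset.refl _)
          intro x hx
          rcases Finset.mem_union.1 hx with hx | hx
          · exact K_subset G D hx
          · rw [hl'fin] at hx
            exact (Finset.erase_subset _ _) ((Finset.mem_sdiff.1 hx).1)
        | a :: pre', h =>
          have hl' : l' = pre' ++ z :: post := by injection h with _ h2
          have := hl'prop pre' z post hl'
          rwa [hKeq] at this


noncomputable def delList (D : Finset V) : List V := (exists_delList G D).choose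

lemma delList_toFinset (D : Finset V) : (delList G D).toFinset = D \ K G D :=
  (exists_delList G D).choose_spec.1

lemma delList_prop (D : Finset V) : ∀ pre z post, delList G D = pre ++ z :: post →
    2 * Fintype.card V * ((G.neighborFinset z ∩ (K G D ∪ post.toFinset)).card)
      < G.edgeFinset.card :=
  (exists_delList G D).choose_spec.2

def downset (v : V) : Finset V := Finset.univ.filter (· ≤ v)

lemma downset_mono {v w : V} (h : v ≤ w) : downset v ⊆ downset w := by
  intro x hx
  simp only [downset, Finset.mem_filter] at *
  exact ⟨hx.1, le_trans hx.2 h⟩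

def Kd (v : V) : Finset V := K G (downset v)

def stopF (z : V) : Finset V := Finset.univ.filter (fun w => z ∈ Kd G w)

noncomputable def kappa (z : V) : WithTop V := (stopF G z).min

noncomputable def Sz (z : V) : Finset V :=
  Finset.univ.filter (fun x => (x : WithTop V) < kappa G z)

lemma mem_Sz_iff {x z : V} : x ∈ Sz G z ↔ (x : WithTop V) < kappa G z := by
  simp [Sz]

lemma kappa_le_of_mem {z w : V} (h : z ∈ Kd G w) : kappa G z ≤ (w : WithTop V) :=
  Finset.min_le (by simp [stopF, h])

lemma mem_Kd_of_kappa_le {z w : V} (h : kappa G z ≤ (w : WithTop V)) : z ∈ Kd G w := by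
  cases hm : kappa G z with
  | top => rw [hm] at h; exact absurd h (by simp)
  | coe w₀ =>
    rw [hm] at h
    have hw₀ : w₀ ∈ stopF G z := Finset.mem_of_min hm
    have hw₀w : w₀ ≤ w := by exact_mod_cast h
    simp only [stopF, Finset.mem_filter] at hw₀
    exact K_mono G (downset_mono hw₀w) hw₀.2

lemma kappa_gt_of_not_mem {z w : V} (h : z ∉ Kd G w) : (w : WithTop V) < kappa G z := by
  by_contra hcon
  exact h (mem_Kd_of_kappa_le G (le_of_not_gt hcon))

lemma not_mem_K_Sz (z : V) : z ∉ K G (Sz G z) := by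
  rcases Finset.eq_empty_or_nonempty (Sz G z) with h | h
  · rw [h]
    intro hz
    exact absurd (K_subset G ∅ hz) (by simp)
  · intro hz
    have hdc : Sz G z = downset ((Sz G z).max' h) := by
      ext x
      simp only [downset, Finset.mem_filter, Finset.mem_univ, true_and]
      constructor
      · intro hx
        exact (Sz G z).le_max' x hx
      · intro hx
        have hm := (Sz G z).max'_mem h
        rw [mem_Sz_iff] at hm ⊢
        exact lt_of_le_of_lt (by exact_mod_cast hx) hm
    rw [hdc] at hz
    have h1 : kappa G z ≤ ((Sz G z).max' h : WithTop V) := kappa_le_of_mem G hz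
    have h2 : (((Sz G z).max' h : V) : WithTop V) < kappa G z := by
      rw [← mem_Sz_iff]
      exact (Sz G z).max'_mem h
    exact absurd (lt_of_le_of_lt h1 h2) (lt_irrefl _)

lemma Kd_subset_KSz {w z : V} (h : (w : WithTop V) < kappa G z) : Kd G w ⊆ K G (Sz G z) := by
  apply K_mono
  intro x hx
  simp only [downset, Finset.mem_filter, Finset.mem_univ, true_and] at hx
  rw [mem_Sz_iff]
  exact lt_of_le_of_lt (by exact_mod_cast hx) h

lemma mem_KSz_of_kappa_lt {y z : V} (h : kappa G y < kappa G z) : y ∈ K G (Sz G z) := by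
  cases hm : kappa G y with
  | top => rw [hm] at h; exact absurd h (by simp)
  | coe w₁ =>
    have hw₁ : w₁ ∈ stopF G y := Finset.mem_of_min hm
    simp only [stopF, Finset.mem_filter] at hw₁
    rw [hm] at h
    exact Kd_subset_KSz G h hw₁.2


noncomputable def later (z : V) : Finset V :=
  ((delList G (Sz G z)).drop ((delList G (Sz G z)).idxOf z + 1)).toFinset

noncomputable def covered (z : V) : Finset V :=
  if z ∈ Sz G z \ K G (Sz G z) then
    G.neighborFinset z ∩ (K G (Sz G z) ∪ later G z)
  else ∅

lemma self_decomp {l : List V} {z : V} (h : z ∈ l) :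
    l = l.take (l.idxOf z) ++ z :: l.drop (l.idxOf z + 1) := by
  have hi : l.idxOf z < l.length := List.idxOf_lt_length_iff.2 h
  conv_lhs => rw [← List.take_append_drop (l.idxOf z) l]
  rw [List.drop_eq_getElem_cons hi, List.getElem_idxOf hi]

lemma covered_bound (z : V) :
    2 * Fintype.card V * (covered G z).card ≤ G.edgeFinset.card := by
  unfold covered
  split_ifs with h
  · have hz : z ∈ delList G (Sz G z) := by
      rw [← List.mem_toFinset, delList_toFinset]
      exact h
    exact le_of_lt (delList_prop G (Sz G z) _ z _ (self_decomp hz))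
  · simp

lemma mem_later_of_lt {z y : V} (hz : z ∈ delList G (Sz G z)) (hy : y ∈ delList G (Sz G z))
    (hlt : (delList G (Sz G z)).idxOf z < (delList G (Sz G z)).idxOf y) :
    y ∈ later G z := by
  set l := delList G (Sz G z) with hl
  have hiy : l.idxOf y < l.length := List.idxOf_lt_length_iff.2 hy
  unfold later
  rw [List.mem_toFinset, ← hl]
  refine List.mem_iff_getElem.2 ⟨l.idxOf y - (l.idxOf z + 1), by rw [List.length_drop]; omega, ?_⟩
  rw [List.getElem_drop]
  have h : l.idxOf z + 1 + (l.idxOf y - (l.idxOf z + 1)) = l.idxOf y := by omega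
  simp only [h]
  exact List.getElem_idxOf hiy

lemma indexOf_ne {l : List V} {u v : V} (hu : u ∈ l) (hv : v ∈ l) (huv : u ≠ v) :
    l.idxOf u ≠ l.idxOf v := by
  intro h
  apply huv
  have hiu : l.idxOf u < l.length := List.idxOf_lt_length_iff.2 hu
  have hiv : l.idxOf v < l.length := List.idxOf_lt_length_iff.2 hv
  have h1 : l[l.idxOf u]'hiu = u := List.getElem_idxOf hiu
  have h2 : l[l.idxOf v]'hiv = v := List.getElem_idxOf hiv
  rw [← h1, ← h2]
  congr 1


noncomputable def chargeOf (p : V × V) : V × V :=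
  if kappa G p.1 < kappa G p.2 then (p.2, p.1)
  else if kappa G p.2 < kappa G p.1 then (p.1, p.2)
  else if (delList G (Sz G p.1)).idxOf p.1 < (delList G (Sz G p.1)).idxOf p.2
    then (p.1, p.2) else (p.2, p.1)

def Plt : Finset (V × V) := Finset.univ.filter (fun p => G.Adj p.1 p.2 ∧ p.1 < p.2)

noncomputable def P : Finset (V × V) := (Plt G).filter (fun p => p.1 ∉ Kd G p.2)

lemma charge_spec : ∀ p ∈ P G, (chargeOf G p).2 ∈ covered G (chargeOf G p).1 ∧
    (chargeOf G p = (p.1, p.2) ∨ chargeOf G p = (p.2, p.1)) := by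
  rintro ⟨u, v⟩ hp
  simp only [P, Plt, Finset.mem_filter, Finset.mem_univ, true_and] at hp
  obtain ⟨⟨hadj, hlt⟩, hnotK⟩ := hp
  have hvκu : (v : WithTop V) < kappa G u := kappa_gt_of_not_mem G hnotK
  have huv : (u : WithTop V) < (v : WithTop V) := by exact_mod_cast hlt
  have huκu : (u : WithTop V) < kappa G u := lt_trans huv hvκu
  unfold chargeOf
  split_ifs with h1 h2 h3
  · -- kappa u < kappa v : charge v, partner u ∈ K (Sz v)
    have hvκv : (v : WithTop V) < kappa G v := lt_trans hvκu h1
    refine ⟨?_, Or.inr rfl⟩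
    simp only
    rw [covered, if_pos (Finset.mem_sdiff.2 ⟨(mem_Sz_iff G).2 hvκv, not_mem_K_Sz G v⟩)]
    refine Finset.mem_inter.2 ⟨?_, Finset.mem_union_left _ (mem_KSz_of_kappa_lt G h1)⟩
    rw [SimpleGraph.mem_neighborFinset]
    exact hadj.symm
  · -- kappa v < kappa u : charge u, partner v ∈ K (Sz u)
    refine ⟨?_, Or.inl rfl⟩
    simp only
    rw [covered, if_pos (Finset.mem_sdiff.2 ⟨(mem_Sz_iff G).2 huκu, not_mem_K_Sz G u⟩)]
    refine Finset.mem_inter.2 ⟨?_, Finset.mem_union_left _ (mem_KSz_of_kappa_lt G h2)⟩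
    rw [SimpleGraph.mem_neighborFinset]
    exact hadj
  · -- tie, u earlier in deletion list : charge u, v ∈ later u
    have hk : kappa G u = kappa G v := le_antisymm (le_of_not_gt h2) (le_of_not_gt h1)
    have hSeq : Sz G u = Sz G v := by unfold Sz; rw [hk]
    have hvκv : (v : WithTop V) < kappa G v := by rw [← hk]; exact hvκu
    have huX : u ∈ Sz G u \ K G (Sz G u) :=
      Finset.mem_sdiff.2 ⟨(mem_Sz_iff G).2 huκu, not_mem_K_Sz G u⟩
    have hvX : v ∈ Sz G v \ K G (Sz G v) :=
      Finset.mem_sdiff.2 ⟨(mem_Sz_iff G).2 hvκv, not_mem_K_Sz G v⟩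
    have hul : u ∈ delList G (Sz G u) := by
      rw [← List.mem_toFinset, delList_toFinset]; exact huX
    have hvl : v ∈ delList G (Sz G u) := by
      rw [← List.mem_toFinset, delList_toFinset, hSeq]; exact hvX
    refine ⟨?_, Or.inl rfl⟩
    simp only
    rw [covered, if_pos huX]
    refine Finset.mem_inter.2 ⟨?_, Finset.mem_union_right _ ?_⟩
    · rw [SimpleGraph.mem_neighborFinset]; exact hadj
    · exact mem_later_of_lt G hul hvl h3
  · -- tie, v earlier : charge v, u ∈ later v
    have hk : kappa G u = kappa G v := le_antisymm (le_of_not_gt h2) (le_of_not_gt h1)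
    have hSeq : Sz G u = Sz G v := by unfold Sz; rw [hk]
    have hvκv : (v : WithTop V) < kappa G v := by rw [← hk]; exact hvκu
    have huX : u ∈ Sz G u \ K G (Sz G u) :=
      Finset.mem_sdiff.2 ⟨(mem_Sz_iff G).2 huκu, not_mem_K_Sz G u⟩
    have hvX : v ∈ Sz G v \ K G (Sz G v) :=
      Finset.mem_sdiff.2 ⟨(mem_Sz_iff G).2 hvκv, not_mem_K_Sz G v⟩
    have hul : u ∈ delList G (Sz G v) := by
      rw [← List.mem_toFinset, delList_toFinset, ← hSeq]; exact huX
    have hvl : v ∈ delList G (Sz G v) := by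
      rw [← List.mem_toFinset, delList_toFinset]; exact hvX
    have hne : (delList G (Sz G u)).idxOf u ≠ (delList G (Sz G u)).idxOf v :=
      indexOf_ne (by rw [hSeq]; exact hul) (by rw [hSeq]; exact hvl) (ne_of_lt hlt)
    have h3' : ¬ (delList G (Sz G u)).idxOf u < (delList G (Sz G u)).idxOf v := h3
    have h4 : (delList G (Sz G u)).idxOf v < (delList G (Sz G u)).idxOf u := by omega
    refine ⟨?_, Or.inr rfl⟩
    simp only
    rw [covered, if_pos hvX]
    refine Finset.mem_inter.2 ⟨?_, Finset.mem_union_right _ ?_⟩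
    · rw [SimpleGraph.mem_neighborFinset]; exact hadj.symm
    · apply mem_later_of_lt G hvl hul
      rw [← hSeq]
      exact h4


lemma mem_P_lt {p : V × V} (hp : p ∈ P G) : p.1 < p.2 := by
  simp only [P, Plt, Finset.mem_filter, Finset.mem_univ, true_and] at hp
  exact hp.1.2

lemma card_P_le : (P G).card ≤ ∑ z : V, (covered G z).card := by
  classical
  set T := Finset.univ.filter (fun q : V × V => q.2 ∈ covered G q.1) with hT
  have h1 : (P G).card ≤ T.card := by
    apply Finset.card_le_card_of_injOn (chargeOf G)
    · intro p hp
      simp only [hT, Finset.mem_coe, Finset.mem_filter, Finset.mem_univ, true_and]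
      exact (charge_spec G p hp).1
    · intro p hp q hq hpq
      rw [Finset.mem_coe] at hp hq
      have hp' : p.1 < p.2 := mem_P_lt G hp
      have hq' : q.1 < q.2 := mem_P_lt G hq
      rcases (charge_spec G p hp).2 with h|h <;> rcases (charge_spec G q hq).2 with h'|h' <;>
        rw [h, h'] at hpq <;>
        rw [Prod.ext_iff] at hpq <;> simp only at hpq
      · exact Prod.ext hpq.1 hpq.2
      · exact absurd (hpq.1 ▸ hpq.2 ▸ hp') (lt_asymm hq')
      · exact absurd (hpq.1 ▸ hpq.2 ▸ hq') (lt_asymm hp')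
      · exact Prod.ext hpq.2 hpq.1
  have h2 : T.card = ∑ z : V, (covered G z).card := by
    rw [Finset.card_eq_sum_card_fiberwise (f := Prod.fst) (t := Finset.univ)
      (fun x _ => Finset.mem_univ _)]
    apply Finset.sum_congr rfl
    intro z _
    apply Finset.card_bij (fun q _ => q.2)
    · intro q hq
      simp only [hT, Finset.mem_filter, Finset.mem_univ, true_and] at hq
      rw [← hq.2]
      exact hq.1
    · intro q hq q' hq' hqq
      simp only [hT, Finset.mem_filter] at hq hq'
      exact Prod.ext (hq.2.trans hq'.2.symm) hqq
    · intro y hy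
      refine ⟨(z, y), ?_, rfl⟩
      simp only [hT, Finset.mem_filter, Finset.mem_univ, true_and]
      exact ⟨hy, trivial⟩
  omega

lemma two_mul_cardP_le (hn : 1 ≤ Fintype.card V) :
    2 * (P G).card ≤ G.edgeFinset.card := by
  have h3 : Fintype.card V * (2 * (P G).card) ≤ Fintype.card V * G.edgeFinset.card := by
    calc Fintype.card V * (2 * (P G).card) = 2 * Fintype.card V * (P G).card := by ring
      _ ≤ 2 * Fintype.card V * ∑ z : V, (covered G z).card :=
          Nat.mul_le_mul_left _ (card_P_le G)
      _ = ∑ z : V, 2 * Fintype.card V * (covered G z).card := Finset.mul_sum _ _ _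
      _ ≤ ∑ _z : V, G.edgeFinset.card := Finset.sum_le_sum (fun z _ => covered_bound G z)
      _ = Fintype.card V * G.edgeFinset.card := by
          rw [Finset.sum_const, Finset.card_univ, smul_eq_mul]
  exact Nat.le_of_mul_le_mul_left h3 (by omega)

def dartEquiv : G.Dart ≃ {p : V × V // G.Adj p.1 p.2} where
  toFun d := ⟨d.toProd, d.adj⟩
  invFun p := ⟨p.1, p.2⟩
  left_inv d := rfl
  right_inv p := rfl

lemma card_Plt : (Plt G).card = G.edgeFinset.card := by
  classical
  have h1 : Fintype.card G.Dart = 2 * G.edgeFinset.card :=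
    SimpleGraph.dart_card_eq_twice_card_edges G
  have h2 : Fintype.card G.Dart
      = (Finset.univ.filter (fun p : V × V => G.Adj p.1 p.2)).card := by
    rw [Fintype.card_congr (dartEquiv G), Fintype.card_subtype]
  have h3 : Finset.univ.filter (fun p : V × V => G.Adj p.1 p.2)
      = Plt G ∪ (Finset.univ.filter (fun p : V × V => G.Adj p.1 p.2 ∧ p.2 < p.1)) := by
    ext p
    simp only [Plt, Finset.mem_filter, Finset.mem_univ, true_and, Finset.mem_union]
    constructor
    · intro h
      rcases lt_or_gt_of_ne (G.ne_of_adj h) with hlt | hgt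
      · exact Or.inl ⟨h, hlt⟩
      · exact Or.inr ⟨h, hgt⟩
    · rintro (⟨h, _⟩ | ⟨h, _⟩) <;> exact h
  have hdisj : Disjoint (Plt G)
      (Finset.univ.filter (fun p : V × V => G.Adj p.1 p.2 ∧ p.2 < p.1)) := by
    rw [Finset.disjoint_left]
    intro p hp hp'
    simp only [Plt, Finset.mem_filter] at hp hp'
    exact absurd hp.2.2 (lt_asymm hp'.2.2)
  have h4 : (Finset.univ.filter (fun p : V × V => G.Adj p.1 p.2 ∧ p.2 < p.1)).card
      = (Plt G).card := by
    apply Finset.card_bij (fun p _ => (p.2, p.1))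
    · intro p hp
      simp only [Plt, Finset.mem_filter, Finset.mem_univ, true_and] at *
      exact ⟨hp.1.symm, hp.2⟩
    · intro p hp q hq hpq
      rw [Prod.ext_iff] at hpq
      simp only at hpq
      exact Prod.ext hpq.2 hpq.1
    · intro p hp
      refine ⟨(p.2, p.1), ?_, rfl⟩
      simp only [Plt, Finset.mem_filter, Finset.mem_univ, true_and] at *
      exact ⟨hp.1.symm, hp.2⟩
  rw [h3, Finset.card_union_of_disjoint hdisj, h4] at h2
  omega

noncomputable def good (v : V) : ℕ := (G.neighborFinset v ∩ Kd G v).card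

lemma good_sum_add : (∑ v : V, good G v) + (P G).card = G.edgeFinset.card := by
  classical
  have hsplit : ((Plt G).filter (fun p => p.1 ∈ Kd G p.2)).card + (P G).card = (Plt G).card := by
    unfold P
    rw [Finset.card_filter_add_card_filter_not]
  have hgood : ((Plt G).filter (fun p => p.1 ∈ Kd G p.2)).card = ∑ v : V, good G v := by
    rw [Finset.card_eq_sum_card_fiberwise (f := Prod.snd) (t := Finset.univ)
      (fun x _ => Finset.mem_univ _)]
    apply Finset.sum_congr rfl
    intro v _
    unfold good
    apply Finset.card_bij (fun q _ => q.1)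
    · intro q hq
      simp only [Plt, Finset.mem_filter, Finset.mem_univ, true_and] at hq
      obtain ⟨⟨⟨hadj, _⟩, hK⟩, hsnd⟩ := hq
      rw [← hsnd]
      exact Finset.mem_inter.2 ⟨(SimpleGraph.mem_neighborFinset _ _ _).2 hadj.symm, hK⟩
    · intro q hq q' hq' hqq
      simp only [Finset.mem_filter] at hq hq'
      exact Prod.ext hqq (hq.2.trans hq'.2.symm)
    · intro u hu
      rcases Finset.mem_inter.1 hu with ⟨hnb, hK⟩
      have hadj : G.Adj v u := (SimpleGraph.mem_neighborFinset _ _ _).1 hnb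
      have hle : u ≤ v := by
        have := K_subset G (downset v) hK
        simp only [downset, Finset.mem_filter] at this
        exact this.2
      refine ⟨(u, v), ?_, rfl⟩
      simp only [Plt, Finset.mem_filter, Finset.mem_univ, true_and]
      exact ⟨⟨⟨hadj.symm, lt_of_le_of_ne hle (G.ne_of_adj hadj).symm⟩, hK⟩, trivial⟩
  rw [← card_Plt G, ← hsplit, hgood]

lemma edge_le_two_good (hn : 1 ≤ Fintype.card V) :
    G.edgeFinset.card ≤ 2 * ∑ v : V, good G v := by
  have h1 := good_sum_add G
  have h2 := two_mul_cardP_le G hn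
  omega


def walkF (S : Finset V) : (j : ℕ) → V → Finset (Fin (j+1) → V)
  | 0, u => {fun _ => u}
  | j+1, u => (G.neighborFinset u ∩ S).biUnion
      (fun u' => (walkF S j u').image (Fin.cons u))

lemma walkF_zero {S : Finset V} {j : ℕ} {u : V} :
    ∀ w ∈ walkF G S j u, w 0 = u := by
  cases j with
  | zero =>
    intro w hw
    simp only [walkF, Finset.mem_singleton] at hw
    rw [hw]
  | succ j =>
    intro w hw
    simp only [walkF, Finset.mem_biUnion, Finset.mem_image] at hw
    obtain ⟨u', _, w', _, rfl⟩ := hw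
    exact Fin.cons_zero _ _

lemma walkF_card {S : Finset V} {j : ℕ} {u : V} :
    (walkF G S (j+1) u).card = ∑ u' ∈ G.neighborFinset u ∩ S, (walkF G S j u').card := by
  rw [walkF, Finset.card_biUnion, Finset.sum_congr rfl]
  · intro u' _
    exact Finset.card_image_of_injective _ (Fin.cons_right_injective (α := fun _ : Fin (j+2) => V) u)
  · intro a _ b _ hab
    rw [Function.onFun, Finset.disjoint_left]
    rintro w hwa hwb
    simp only [Finset.mem_image] at hwa hwb
    obtain ⟨wa, hwa, rfl⟩ := hwa
    obtain ⟨wb, hwb, heq⟩ := hwb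
    have hba : wb = wa := Fin.cons_right_injective (α := fun _ : Fin (j+2) => V) u heq
    subst hba
    exact hab ((walkF_zero G wb hwa).symm.trans (walkF_zero G wb hwb))

lemma walkF_lb {S : Finset V} (hS : ∀ y ∈ S,
      G.edgeFinset.card ≤ 2 * Fintype.card V * (G.neighborFinset y ∩ S).card)
    (hn : 1 ≤ Fintype.card V) :
    ∀ (j : ℕ) (u : V), u ∈ S →
      ((G.edgeFinset.card : ℝ) / (2 * Fintype.card V)) ^ j ≤ (walkF G S j u).card := by
  have hN : (0 : ℝ) < 2 * Fintype.card V := by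
    have : (1 : ℝ) ≤ Fintype.card V := by exact_mod_cast hn
    linarith
  have ht0 : (0 : ℝ) ≤ (G.edgeFinset.card : ℝ) / (2 * Fintype.card V) :=
    div_nonneg (by positivity) (le_of_lt hN)
  intro j
  induction j with
  | zero =>
    intro u _
    simp [walkF]
  | succ j ih =>
    intro u hu
    rw [walkF_card]
    have hbr : ((G.edgeFinset.card : ℝ) / (2 * Fintype.card V))
        ≤ ((G.neighborFinset u ∩ S).card : ℝ) := by
      rw [div_le_iff₀ hN]
      have := hS u hu
      have : (G.edgeFinset.card : ℝ) ≤ 2 * Fintype.card V * (G.neighborFinset u ∩ S).card := by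
        exact_mod_cast this
      linarith
    calc ((G.edgeFinset.card : ℝ) / (2 * Fintype.card V)) ^ (j+1)
        = ((G.edgeFinset.card : ℝ) / (2 * Fintype.card V)) ^ j
          * ((G.edgeFinset.card : ℝ) / (2 * Fintype.card V)) := by ring
      _ ≤ ((G.neighborFinset u ∩ S).card : ℝ)
          * ((G.edgeFinset.card : ℝ) / (2 * Fintype.card V)) ^ j := by
          rw [mul_comm]
          exact mul_le_mul_of_nonneg_right hbr (pow_nonneg ht0 j)
      _ = ∑ _u' ∈ G.neighborFinset u ∩ S,
            ((G.edgeFinset.card : ℝ) / (2 * Fintype.card V)) ^ j := by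
          rw [Finset.sum_const, nsmul_eq_mul]
      _ ≤ ∑ u' ∈ G.neighborFinset u ∩ S, ((walkF G S j u').card : ℝ) :=
          Finset.sum_le_sum (fun u' hu' => ih u' (Finset.mem_inter.1 hu').2)
      _ = ((∑ u' ∈ G.neighborFinset u ∩ S, (walkF G S j u').card : ℕ) : ℝ) := by
          push_cast
          rfl


lemma walkF_adj {S : Finset V} (j : ℕ) : ∀ (u : V), ∀ w ∈ walkF G S j u,
    ∀ i : Fin j, G.Adj (w i.castSucc) (w i.succ) := by
  induction j with
  | zero => intro u w _ i; exact i.elim0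
  | succ j ih =>
    intro u w hw i
    simp only [walkF, Finset.mem_biUnion, Finset.mem_image] at hw
    obtain ⟨u', hu', w', hw', rfl⟩ := hw
    induction i using Fin.cases with
    | zero =>
      have h0 : (Fin.cons u w' : Fin (j+2) → V) (Fin.castSucc 0) = u := by
        rw [Fin.castSucc_zero, Fin.cons_zero]
      have h1 : (Fin.cons u w' : Fin (j+2) → V) ((0 : Fin (j+1)).succ) = w' 0 :=
        Fin.cons_succ _ _ _
      rw [h0, h1, walkF_zero G w' hw']
      exact (SimpleGraph.mem_neighborFinset _ _ _).1 (Finset.mem_inter.1 hu').1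
    | succ i' =>
      have h0 : (Fin.cons u w' : Fin (j+2) → V) (Fin.castSucc i'.succ) = w' (Fin.castSucc i') := by
        rw [← Fin.succ_castSucc, Fin.cons_succ]
      have h1 : (Fin.cons u w' : Fin (j+2) → V) (i'.succ.succ) = w' i'.succ :=
        Fin.cons_succ _ _ _
      rw [h0, h1]
      exact ih u' w' hw' i'

lemma walkF_memS {S : Finset V} (j : ℕ) : ∀ (u : V), ∀ w ∈ walkF G S j u,
    ∀ i : Fin j, w i.succ ∈ S := by
  induction j with
  | zero => intro u w _ i; exact i.elim0
  | succ j ih =>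
    intro u w hw i
    simp only [walkF, Finset.mem_biUnion, Finset.mem_image] at hw
    obtain ⟨u', hu', w', hw', rfl⟩ := hw
    induction i using Fin.cases with
    | zero =>
      have h1 : (Fin.cons u w' : Fin (j+2) → V) ((0 : Fin (j+1)).succ) = w' 0 :=
        Fin.cons_succ _ _ _
      rw [h1, walkF_zero G w' hw']
      exact (Finset.mem_inter.1 hu').2
    | succ i' =>
      have h1 : (Fin.cons u w' : Fin (j+2) → V) (i'.succ.succ) = w' i'.succ :=
        Fin.cons_succ _ _ _
      rw [h1]
      exact ih u' w' hw' i'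

lemma main_aux (hn : 1 ≤ Fintype.card V) (k : ℕ) (hk : 1 ≤ k) :
    (Fintype.card V : ℝ) * ((G.edgeFinset.card : ℝ) / (2 * Fintype.card V)) ^ k ≤
      (((Finset.univ.filter (fun w : Fin (k+1) → V =>
        (∀ i : Fin k, G.Adj (w i.castSucc) (w i.succ)) ∧ ∀ i, w i ≤ w 0)).card : ℕ) : ℝ) := by
  classical
  obtain ⟨k', rfl⟩ : ∃ k', k = k' + 1 := ⟨k - 1, by omega⟩
  set t : ℝ := (G.edgeFinset.card : ℝ) / (2 * Fintype.card V) with hts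
  have hN : (0 : ℝ) < (Fintype.card V : ℝ) := by exact_mod_cast hn
  have hN2 : (0 : ℝ) < 2 * Fintype.card V := by linarith
  have ht0 : (0 : ℝ) ≤ t := div_nonneg (by positivity) (le_of_lt hN2)
  set CW := Finset.univ.filter (fun w : Fin (k'+1+1) → V =>
    (∀ i : Fin (k'+1), G.Adj (w i.castSucc) (w i.succ)) ∧ ∀ i, w i ≤ w 0) with hCW
  set B := Finset.univ.biUnion (fun v : V => walkF G (Kd G v) (k'+1) v) with hB
  -- B ⊆ CW
  have hBsub : B ⊆ CW := by
    intro w hw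
    simp only [hB, Finset.mem_biUnion] at hw
    obtain ⟨v, _, hw⟩ := hw
    simp only [hCW, Finset.mem_filter, Finset.mem_univ, true_and]
    refine ⟨walkF_adj G (k'+1) v w hw, ?_⟩
    intro i
    rw [walkF_zero G w hw]
    induction i using Fin.cases with
    | zero => rw [walkF_zero G w hw]
    | succ i' =>
      have := walkF_memS G (k'+1) v w hw i'
      have h2 := K_subset G (downset v) this
      simp only [downset, Finset.mem_filter] at h2
      exact h2.2
  -- card B = sum
  have hBcard : (B.card : ℝ) = ∑ v : V, ((walkF G (Kd G v) (k'+1) v).card : ℝ) := by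
    rw [hB, Finset.card_biUnion]
    · push_cast
      rfl
    · intro a _ b _ hab
      rw [Function.onFun, Finset.disjoint_left]
      intro w hwa hwb
      exact hab ((walkF_zero G w hwa).symm.trans (walkF_zero G w hwb))
  -- per-vertex bound
  have hper : ∀ v : V, ((good G v : ℝ)) * t ^ k'
      ≤ ((walkF G (Kd G v) (k'+1) v).card : ℝ) := by
    intro v
    have hwit := (K_wit G (downset v)).2
    have hcard : ((walkF G (Kd G v) (k'+1) v).card : ℝ)
        = ∑ u ∈ G.neighborFinset v ∩ Kd G v, ((walkF G (Kd G v) k' u).card : ℝ) := by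
      rw [walkF_card]
      push_cast
      rfl
    rw [hcard]
    calc ((good G v : ℝ)) * t ^ k'
        = ∑ _u ∈ G.neighborFinset v ∩ Kd G v, t ^ k' := by
          rw [Finset.sum_const, nsmul_eq_mul, good]
      _ ≤ ∑ u ∈ G.neighborFinset v ∩ Kd G v, ((walkF G (Kd G v) k' u).card : ℝ) := by
          apply Finset.sum_le_sum
          intro u hu
          exact walkF_lb G hwit hn k' u (Finset.mem_inter.1 hu).2
  -- sum of goods
  have hgood : (G.edgeFinset.card : ℝ) ≤ 2 * ∑ v : V, (good G v : ℝ) := by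
    have := edge_le_two_good G hn
    have h2 : ((G.edgeFinset.card : ℕ) : ℝ) ≤ ((2 * ∑ v : V, good G v : ℕ) : ℝ) := by
      exact_mod_cast this
    push_cast at h2
    linarith
  have hNt : (Fintype.card V : ℝ) * t ^ (k'+1) ≤ (∑ v : V, (good G v : ℝ)) * t ^ k' := by
    have h1 : (Fintype.card V : ℝ) * t ^ (k'+1) = ((Fintype.card V : ℝ) * t) * t ^ k' := by
      ring
    have h2 : (Fintype.card V : ℝ) * t = (G.edgeFinset.card : ℝ) / 2 := by
      rw [hts]
      field_simp
    rw [h1, h2]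
    apply mul_le_mul_of_nonneg_right _ (pow_nonneg ht0 k')
    linarith
  calc (Fintype.card V : ℝ) * t ^ (k'+1)
      ≤ (∑ v : V, (good G v : ℝ)) * t ^ k' := hNt
    _ = ∑ v : V, (good G v : ℝ) * t ^ k' := Finset.sum_mul _ _ _
    _ ≤ ∑ v : V, ((walkF G (Kd G v) (k'+1) v).card : ℝ) :=
        Finset.sum_le_sum (fun v _ => hper v)
    _ = (B.card : ℝ) := hBcard.symm
    _ ≤ (CW.card : ℝ) := by exact_mod_cast Finset.card_le_card hBsub

end CappedProof

theorem capped_kwalks_lower_bound {V : Type*} [Fintype V] [DecidableEq V]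
    (G : SimpleGraph V) [DecidableRel G.Adj] (L : LinearOrder V)
    (k : ℕ) (hk : 1 ≤ k) (hn : 1 ≤ Fintype.card V) :
    (Fintype.card V : ℝ) *
        ((G.edgeFinset.card : ℝ) / (2 * Fintype.card V)) ^ k ≤
      (Nat.card (cappedWalks G L.le k) : ℝ) := by
  letI := L
  have haux := CappedProof.main_aux G hn k hk
  have hset : Nat.card (cappedWalks G L.le k)
      = (Finset.univ.filter (fun w : Fin (k+1) → V =>
        (∀ i : Fin k, G.Adj (w i.castSucc) (w i.succ)) ∧ ∀ i, w i ≤ w 0)).card := by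
    have hEq : cappedWalks G L.le k
        = ↑(Finset.univ.filter (fun w : Fin (k+1) → V =>
          (∀ i : Fin k, G.Adj (w i.castSucc) (w i.succ)) ∧ ∀ i, w i ≤ w 0)) := by
      ext w
      constructor
      · intro hw
        simp only [Finset.coe_filter, Set.mem_setOf_eq, Finset.mem_univ, true_and]
        exact hw
      · intro hw
        simp only [Finset.coe_filter, Set.mem_setOf_eq, Finset.mem_univ, true_and] at hw
        exact hw
    rw [hEq]
    exact Nat.card_eq_finsetCard _
  rw [hset]
  exact haux
end

section
/- The function ‖·‖_◦ on ℝ^n satisfies the axioms of a norm: for all vectors u, v ∈ ℝ^n and all scalars c ∈ ℝ, (i) ‖u + v‖_◦ ≤ ‖u‖_◦ + ‖v‖_◦, (ii) ‖c·u‖_◦ = |c|·‖u‖_◦, and (iii) ‖u‖_◦ = 0 if and only if u = 0. -/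
open MeasureTheory

/-- The `‖·‖_◦` norm: `‖v‖_◦ = ∫₀^∞ √(#{i : |v_i| ≥ x}) dx`. -/
noncomputable def circNorm {n : ℕ} (v : Fin n → ℝ) : ℝ :=
  ∫ x in Set.Ioi (0 : ℝ),
    Real.sqrt ((Finset.univ.filter (fun i : Fin n => x ≤ |v i|)).card : ℝ)

open Finset

noncomputable def circA (k : ℕ) : ℝ := Real.sqrt (k + 1) - Real.sqrt k

lemma circA_nonneg (k : ℕ) : 0 ≤ circA k :=
  sub_nonneg.2 (Real.sqrt_le_sqrt (by linarith))

lemma circA_pos (k : ℕ) : 0 < circA k :=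
  sub_pos.2 (Real.sqrt_lt_sqrt (by positivity) (by linarith))

lemma circA_eq_inv (k : ℕ) : circA k = (Real.sqrt (k+1) + Real.sqrt k)⁻¹ := by
  have h1 : (0:ℝ) ≤ (k:ℝ) := by positivity
  have h2 : (0:ℝ) ≤ (k:ℝ) + 1 := by linarith
  apply eq_inv_of_mul_eq_one_left
  have h3 : Real.sqrt ((k:ℝ)+1) ^ 2 = (k:ℝ)+1 := Real.sq_sqrt h2
  have h4 : Real.sqrt (k:ℝ) ^ 2 = (k:ℝ) := Real.sq_sqrt h1
  rw [circA]; nlinarith [h3, h4]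

lemma circA_antitone : Antitone circA := by
  intro j k hjk
  rw [circA_eq_inv, circA_eq_inv]
  have hj : 0 < Real.sqrt (j+1) + Real.sqrt j := by
    have := Real.sqrt_pos.2 (show (0:ℝ) < (j:ℝ)+1 by positivity)
    have := Real.sqrt_nonneg (j:ℝ); linarith
  apply inv_anti₀ hj
  have : (j:ℝ) ≤ (k:ℝ) := by exact_mod_cast hjk
  gcongr

lemma rank_iff {n : ℕ} (w : Fin n → ℝ) (hw : Antitone w) (x : ℝ) (k : Fin n) :
    (k : ℕ) < (univ.filter (fun i => x ≤ w i)).card ↔ x ≤ w k := by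
  constructor
  · intro h
    by_contra hx
    have hsub : (univ.filter fun i => x ≤ w i) ⊆ Finset.Iio k := by
      intro i hi
      simp only [mem_filter] at hi
      rw [Finset.mem_Iio]
      by_contra hik
      push_neg at hik
      exact hx (hi.2.trans (hw hik))
    have hc := Finset.card_le_card hsub
    rw [Fin.card_Iio] at hc
    omega
  · intro h
    have hsub : Finset.Iic k ⊆ univ.filter fun i => x ≤ w i := by
      intro i hi
      simp only [Finset.mem_Iic] at hi
      simp only [mem_filter, mem_univ, true_and]
      exact h.trans (hw hi)
    have hc := Finset.card_le_card hsub
    rw [Fin.card_Iic] at hc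
    omega

lemma circNorm_eq_sum {n : ℕ} (v : Fin n → ℝ) (σ : Equiv.Perm (Fin n))
    (hw : Antitone (fun i => |v (σ i)|)) :
    circNorm v = ∑ k : Fin n, circA k * |v (σ k)| := by
  set w : Fin n → ℝ := fun i => |v (σ i)| with hwdef
  have hcard : ∀ x : ℝ, (univ.filter fun i : Fin n => x ≤ |v i|).card
      = (univ.filter fun i : Fin n => x ≤ w i).card := by
    intro x
    apply Finset.card_equiv σ.symm
    intro i
    simp [hwdef]
  have hpt : ∀ x ∈ Set.Ioi (0:ℝ),
      Real.sqrt ((univ.filter fun i : Fin n => x ≤ |v i|).card : ℝ)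
      = ∑ k : Fin n, Set.indicator (Set.Ioc 0 (w k)) (fun _ => circA k) x := by
    intro x hx
    have hx0 : (0:ℝ) < x := hx
    rw [hcard x]
    set m := (univ.filter fun i : Fin n => x ≤ w i).card with hm
    have step1 : ∀ k : Fin n, Set.indicator (Set.Ioc 0 (w k)) (fun _ => circA k) x
        = if (k:ℕ) < m then circA (k:ℕ) else 0 := by
      intro k
      by_cases h : x ≤ w k
      · rw [Set.indicator_of_mem (show x ∈ Set.Ioc 0 (w k) from ⟨hx0, h⟩), if_pos ((rank_iff w hw x k).2 h)]
      · rw [Set.indicator_of_notMem (fun hc => h hc.2),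
          if_neg (fun hc => h ((rank_iff w hw x k).1 hc))]
    calc Real.sqrt (m : ℝ)
        = ∑ k ∈ Finset.range m, circA k := by
          have hts := Finset.sum_range_sub (fun k : ℕ => Real.sqrt k) m
          simp only [circA]
          rw [show ∑ k ∈ Finset.range m, (Real.sqrt ((k:ℝ) + 1) - Real.sqrt (k:ℝ))
              = ∑ k ∈ Finset.range m, ((fun k : ℕ => Real.sqrt k) (k+1)
                - (fun k : ℕ => Real.sqrt k) k) from by push_cast; rfl, hts]
          simp
      _ = ∑ k ∈ (Finset.range n).filter (fun k => k < m), circA k := by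
          congr 1
          have hmn : m ≤ n := (Finset.card_filter_le _ _).trans (by simp)
          ext k; simp only [Finset.mem_filter, Finset.mem_range]; omega
      _ = ∑ k ∈ Finset.range n, if k < m then circA k else 0 := (Finset.sum_filter _ _)
      _ = ∑ k : Fin n, if (k:ℕ) < m then circA (k:ℕ) else 0 :=
          (Fin.sum_univ_eq_sum_range (fun k => if k < m then circA k else 0) n).symm
      _ = ∑ k : Fin n, Set.indicator (Set.Ioc 0 (w k)) (fun _ => circA k) x := by
          exact Finset.sum_congr rfl (fun k _ => (step1 k).symm)
  rw [circNorm, setIntegral_congr_fun measurableSet_Ioi hpt, integral_finset_sum]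
  · apply Finset.sum_congr rfl
    intro k _
    rw [setIntegral_indicator measurableSet_Ioc,
      Set.inter_eq_self_of_subset_right Set.Ioc_subset_Ioi_self,
      setIntegral_const, measureReal_def, Real.volume_Ioc, smul_eq_mul]
    rw [ENNReal.toReal_ofReal (by simp [hwdef] : (0:ℝ) ≤ w k - 0)]
    simp [hwdef]; ring
  · intro k _
    exact (((integrable_indicator_iff measurableSet_Ioc).2
      (integrableOn_const measure_Ioc_lt_top.ne))).restrict

lemma exists_sort {n : ℕ} (v : Fin n → ℝ) :
    ∃ σ : Equiv.Perm (Fin n), Antitone (fun i => |v (σ i)|) := by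
  refine ⟨Fin.revPerm.trans (Tuple.sort (fun i => |v i|)), fun i j hij => ?_⟩
  exact Tuple.monotone_sort (fun i => |v i|) (Fin.rev_le_rev.2 hij)

lemma rearrange {n : ℕ} (u : Fin n → ℝ) (σ τ : Equiv.Perm (Fin n))
    (hτ : Antitone (fun i => |u (τ i)|)) :
    ∑ k : Fin n, circA k * |u (σ k)| ≤ ∑ k : Fin n, circA k * |u (τ k)| := by
  have hA : Antitone (fun k : Fin n => circA (k : ℕ)) := by
    intro i j hij
    exact circA_antitone (by exact_mod_cast hij)
  have hmono : Monovary (fun k : Fin n => circA (k:ℕ)) (fun k => |u (τ k)|) := by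
    intro i j hg
    rcases le_total i j with h | h
    · exact absurd hg (not_lt.2 (hτ h))
    · exact hA h
  have key := hmono.sum_mul_comp_perm_le_sum_mul (σ := τ⁻¹ * σ)
  simpa using key

theorem circNorm_is_norm {n : ℕ} (u v : Fin n → ℝ) (c : ℝ) :
    circNorm (u + v) ≤ circNorm u + circNorm v ∧
    circNorm (c • u) = |c| * circNorm u ∧
    (circNorm u = 0 ↔ u = 0) := by
  obtain ⟨σ, hσ⟩ := exists_sort (u + v)
  obtain ⟨τ, hτ⟩ := exists_sort u
  obtain ⟨ρ, hρ⟩ := exists_sort v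
  have hu := circNorm_eq_sum u τ hτ
  have hv := circNorm_eq_sum v ρ hρ
  have huv := circNorm_eq_sum (u + v) σ hσ
  refine ⟨?_, ?_, ?_⟩
  · rw [huv, hu, hv]
    have h1 : ∑ k : Fin n, circA (k:ℕ) * |(u + v) (σ k)|
        ≤ ∑ k : Fin n, (circA (k:ℕ) * |u (σ k)| + circA (k:ℕ) * |v (σ k)|) := by
      apply Finset.sum_le_sum
      intro k _
      have h2 := abs_add_le (u (σ k)) (v (σ k))
      have h0 := circA_nonneg (k : ℕ)
      simp only [Pi.add_apply]
      nlinarith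
    rw [Finset.sum_add_distrib] at h1
    exact h1.trans (add_le_add (rearrange u σ τ hτ) (rearrange v σ ρ hρ))
  · have hτc : Antitone (fun i => |(c • u) (τ i)|) := by
      intro i j hij
      simp only [Pi.smul_apply, smul_eq_mul, abs_mul]
      exact mul_le_mul_of_nonneg_left (hτ hij) (abs_nonneg c)
    rw [circNorm_eq_sum (c • u) τ hτc, hu, Finset.mul_sum]
    apply Finset.sum_congr rfl
    intro k _
    simp only [Pi.smul_apply, smul_eq_mul, abs_mul]
    ring
  · constructor
    · intro h
      rw [hu] at h
      have hz := (Finset.sum_eq_zero_iff_of_nonneg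
        (f := fun k : Fin n => circA (k:ℕ) * |u (τ k)|) (s := univ)
        (fun k _ => mul_nonneg (circA_nonneg (k:ℕ)) (abs_nonneg _))).1 h
      funext i
      have hi := hz (τ⁻¹ i) (mem_univ _)
      rcases mul_eq_zero.1 hi with h1 | h1
      · exact absurd h1 (circA_pos _).ne'
      · simpa using abs_eq_zero.1 (by simpa using h1)
    · intro h
      subst h
      rw [circNorm_eq_sum 0 1 (by intro i j _; simp)]
      simp
end

section
/- Let G be a simple undirected graph on n vertices with adjacency matrix X_G, let S be a subset of the vertices of G, and let k ≥ 1 be an integer. Then the number of k-walks (x_0,…,x_k) in G with x_0 ∈ S is at most √|S| · ‖X_G^k · 𝟙‖_◦, where 𝟙 ∈ ℝ^n is the all-ones vector. -/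
open MeasureTheory

open Finset

lemma indicator_int {a : ℝ} :
    IntegrableOn (Set.indicator (Set.Iic a) (fun _ => (1:ℝ))) (Set.Ioi 0) := by
  rw [IntegrableOn, integrable_indicator_iff measurableSet_Iic]
  rw [IntegrableOn, Measure.restrict_restrict measurableSet_Iic]
  apply (integrableOn_const_iff).mpr
  right
  rw [Set.inter_comm, Set.Ioi_inter_Iic]
  exact measure_Ioc_lt_top

lemma indicator_integral {a : ℝ} (ha : 0 ≤ a) :
    ∫ t in Set.Ioi (0:ℝ), Set.indicator (Set.Iic a) (fun _ => (1:ℝ)) t = a := by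
  rw [integral_indicator measurableSet_Iic, Measure.restrict_restrict measurableSet_Iic,
    Set.inter_comm, Set.Ioi_inter_Iic, setIntegral_const, Real.volume_real_Ioc_of_le ha, smul_eq_mul, mul_one,
    sub_zero]

lemma sum_le_circNorm {n : ℕ} (S : Finset (Fin n)) (v : Fin n → ℝ) (hv : ∀ i, 0 ≤ v i) :
    ∑ x ∈ S, v x ≤ Real.sqrt S.card * circNorm v := by
  classical
  set N : ℝ → ℝ := fun t => ((univ.filter fun i : Fin n => t ≤ |v i|).card : ℝ) with hN
  set C : ℝ → ℝ := fun t => ((S.filter fun x => t ≤ v x).card : ℝ) with hC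
  have hCsum : ∀ t, C t = ∑ x ∈ S, Set.indicator (Set.Iic (v x)) (fun _ => (1:ℝ)) t := by
    intro t
    rw [hC]
    simp only [Finset.card_filter]
    push_cast
    exact Finset.sum_congr rfl fun x _ => by simp [Set.indicator_apply, Set.mem_Iic]
  have hNsum : ∀ t, N t = ∑ i : Fin n, Set.indicator (Set.Iic |v i|) (fun _ => (1:ℝ)) t := by
    intro t
    rw [hN]
    simp only [Finset.card_filter]
    push_cast
    exact Finset.sum_congr rfl fun x _ => by simp [Set.indicator_apply, Set.mem_Iic]
  have hCint : IntegrableOn C (Set.Ioi 0) := by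
    rw [IntegrableOn]
    refine Integrable.congr (integrable_finset_sum (f := fun (x : Fin n) (t : ℝ) =>
      Set.indicator (Set.Iic (v x)) (fun _ => (1:ℝ)) t) S fun x _ => indicator_int) ?_
    filter_upwards with t
    rw [hCsum t]
  -- integral of C equals the sum
  have hCeq : ∫ t in Set.Ioi (0:ℝ), C t = ∑ x ∈ S, v x := by
    rw [setIntegral_congr_fun measurableSet_Ioi (g := fun t => ∑ x ∈ S, Set.indicator (Set.Iic (v x)) (fun _ => (1:ℝ)) t) (fun t _ => hCsum t)]
    rw [integral_finset_sum S fun x _ => indicator_int]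
    exact Finset.sum_congr rfl fun x _ => indicator_integral (hv x)
  -- measurability of sqrt ∘ N
  have hNmeas : Measurable N := by
    have : N = fun t => ∑ i : Fin n, Set.indicator (Set.Iic |v i|) (fun _ => (1:ℝ)) t := funext hNsum
    rw [this]
    exact Finset.measurable_sum _ fun i _ =>
      (measurable_const.indicator measurableSet_Iic)
  have hNnonneg : ∀ t, 0 ≤ N t := fun t => by positivity
  -- bound for integrability
  set M : ℝ := ∑ i, |v i| with hM
  have hsqrtNint : IntegrableOn (fun t => Real.sqrt (N t)) (Set.Ioi 0) := by
    refine Integrable.mono' (g := Set.indicator (Set.Ioc 0 M) (fun _ => Real.sqrt n))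
      ?_ ((hNmeas.sqrt).aestronglyMeasurable) ?_
    · rw [integrable_indicator_iff measurableSet_Ioc]
      exact (integrableOn_const_iff).mpr (Or.inr measure_Ioc_lt_top)
    · rw [ae_restrict_iff' measurableSet_Ioi]
      filter_upwards with t ht
      rw [Real.norm_of_nonneg (Real.sqrt_nonneg _)]
      by_cases htM : t ≤ M
      · rw [Set.indicator_of_mem (Set.mem_Ioc.mpr ⟨ht, htM⟩)]
        apply Real.sqrt_le_sqrt
        show ((univ.filter fun i : Fin n => t ≤ |v i|).card : ℝ) ≤ (n : ℝ)
        norm_cast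
        exact (Finset.card_filter_le univ _).trans (by simp)
      · have : N t = 0 := by
          show ((univ.filter fun i : Fin n => t ≤ |v i|).card : ℝ) = 0
          norm_cast
          rw [Finset.card_eq_zero, Finset.filter_eq_empty_iff]
          intro i _ hle
          exact htM (hle.trans (Finset.single_le_sum (f := fun i => |v i|)
            (fun i _ => abs_nonneg _) (mem_univ i)))
        rw [this, Real.sqrt_zero]
        exact Set.indicator_nonneg (fun _ _ => Real.sqrt_nonneg _) _
  -- pointwise bound
  have hpt : ∀ t, C t ≤ Real.sqrt S.card * Real.sqrt (N t) := by
    intro t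
    rw [← Real.sqrt_mul (Nat.cast_nonneg _)]
    have h1 : (S.filter fun x => t ≤ v x).card ≤ S.card := Finset.card_filter_le _ _
    have h2 : (S.filter fun x => t ≤ v x).card ≤ (univ.filter fun i : Fin n => t ≤ |v i|).card := by
      apply Finset.card_le_card
      intro x hx
      rw [Finset.mem_filter] at hx ⊢
      exact ⟨mem_univ _, (le_abs_self _).trans' hx.2⟩
    show ((S.filter fun x => t ≤ v x).card : ℝ) ≤
      Real.sqrt ((S.card : ℝ) * ((univ.filter fun i : Fin n => t ≤ |v i|).card : ℝ))
    rw [show ((S.filter fun x => t ≤ v x).card : ℝ) = Real.sqrt (((S.filter fun x => t ≤ v x).card : ℝ) * ((S.filter fun x => t ≤ v x).card : ℝ)) from (Real.sqrt_mul_self (Nat.cast_nonneg _)).symm]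
    apply Real.sqrt_le_sqrt
    apply mul_le_mul (by exact_mod_cast h1) (by exact_mod_cast h2) (Nat.cast_nonneg _) (Nat.cast_nonneg _)
  calc ∑ x ∈ S, v x = ∫ t in Set.Ioi (0:ℝ), C t := hCeq.symm
    _ ≤ ∫ t in Set.Ioi (0:ℝ), Real.sqrt S.card * Real.sqrt (N t) :=
        integral_mono hCint (hsqrtNint.const_mul _) hpt
    _ = Real.sqrt S.card * circNorm v := by
        rw [integral_const_mul]; rfl

section counting
variable {n : ℕ} (G : SimpleGraph (Fin n)) [DecidableRel G.Adj]

def walkEquiv (m : ℕ) (x : Fin n) :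
    {w : Fin (m + 2) → Fin n //
       (∀ i : Fin (m + 1), G.Adj (w i.castSucc) (w i.succ)) ∧ w 0 = x} ≃
    {t : Fin (m + 1) → Fin n //
       G.Adj x (t 0) ∧ ∀ i : Fin m, G.Adj (t i.castSucc) (t i.succ)} where
  toFun := fun w => ⟨fun i => w.1 i.succ, by
    obtain ⟨w, hw, h0⟩ := w
    refine ⟨?_, ?_⟩
    · have := hw 0
      simpa [h0] using this
    · intro i
      have := hw i.succ
      simpa [← Fin.succ_castSucc] using this⟩
  invFun := fun t => ⟨Fin.cons x t.1, by
    obtain ⟨t, h1, h2⟩ := t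
    refine ⟨?_, by simp⟩
    intro i
    refine Fin.cases ?_ ?_ i
    · simpa using h1
    · intro j
      simpa [← Fin.succ_castSucc] using h2 j⟩
  left_inv := by
    rintro ⟨w, hw, h0⟩
    apply Subtype.ext
    simp only
    rw [← h0]
    exact Fin.cons_self_tail w
  right_inv := by
    rintro ⟨t, h1, h2⟩
    apply Subtype.ext
    funext i
    simp [Fin.cons_succ]

lemma count_walks (m : ℕ) (x : Fin n) :
    (Fintype.card {w : Fin (m + 1) → Fin n //
        (∀ i : Fin m, G.Adj (w i.castSucc) (w i.succ)) ∧ w 0 = x} : ℝ) =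
      (G.adjMatrix ℝ ^ m).mulVec (fun _ => 1) x := by
  induction m generalizing x with
  | zero =>
    have h1 : Fintype.card {w : Fin 1 → Fin n //
        (∀ i : Fin 0, G.Adj (w i.castSucc) (w i.succ)) ∧ w 0 = x} = 1 := by
      refine Fintype.card_eq_one_iff.mpr ⟨⟨fun _ => x, fun i => i.elim0, rfl⟩, ?_⟩
      rintro ⟨w, h1, h2⟩
      refine Subtype.ext (funext fun i => ?_)
      obtain rfl : i = 0 := Subsingleton.elim _ _
      exact h2
    rw [h1, pow_zero, Matrix.one_mulVec]
    simp
  | succ m ih =>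
    have e1 := Fintype.card_congr (walkEquiv G m x)
    rw [e1, Fintype.card_subtype]
    rw [Finset.card_eq_sum_card_fiberwise (f := fun t => t 0) (t := Finset.univ)
      (fun t _ => mem_univ _)]
    have hterm : ∀ y : Fin n,
        ((univ.filter fun t : Fin (m+1) → Fin n =>
            G.Adj x (t 0) ∧ ∀ i : Fin m, G.Adj (t i.castSucc) (t i.succ)).filter
          fun t => t 0 = y).card
        = if G.Adj x y then
            Fintype.card {w : Fin (m + 1) → Fin n //
              (∀ i : Fin m, G.Adj (w i.castSucc) (w i.succ)) ∧ w 0 = y} else 0 := by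
      intro y
      rw [Finset.filter_filter]
      by_cases h : G.Adj x y
      · rw [if_pos h, Fintype.card_subtype]
        congr 1
        apply Finset.filter_congr
        intro t _
        constructor
        · rintro ⟨⟨_, hp⟩, ht⟩; exact ⟨hp, ht⟩
        · rintro ⟨hp, ht⟩; exact ⟨⟨ht ▸ h, hp⟩, ht⟩
      · rw [if_neg h, Finset.card_eq_zero, Finset.filter_eq_empty_iff]
        rintro t _ ⟨⟨ha, _⟩, ht⟩
        exact h (ht ▸ ha)
    push_cast
    rw [Finset.sum_congr rfl (fun y _ => by rw [hterm y])]
    rw [pow_succ', ← Matrix.mulVec_mulVec]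
    rw [Matrix.mulVec]
    rw [show (dotProduct ((G.adjMatrix ℝ) x) ((G.adjMatrix ℝ ^ m).mulVec fun _ => 1)) = ∑ y, (G.adjMatrix ℝ) x y * ((G.adjMatrix ℝ ^ m).mulVec fun _ => 1) y from rfl]
    push_cast
    refine Finset.sum_congr rfl fun y _ => ?_
    rw [SimpleGraph.adjMatrix_apply, ← ih y]
    split <;> simp

end counting

theorem kwalks_from_set_bound {n : ℕ} (G : SimpleGraph (Fin n))
    [DecidableRel G.Adj] (S : Finset (Fin n)) (k : ℕ) (hk : 1 ≤ k) :
    (Nat.card {w : Fin (k + 1) → Fin n |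
        (∀ i : Fin k, G.Adj (w i.castSucc) (w i.succ)) ∧ w 0 ∈ S} : ℝ) ≤
      Real.sqrt S.card * circNorm ((G.adjMatrix ℝ ^ k).mulVec (fun _ => 1)) := by
  classical
  have hmain : (Nat.card {w : Fin (k + 1) → Fin n |
      (∀ i : Fin k, G.Adj (w i.castSucc) (w i.succ)) ∧ w 0 ∈ S})
      = ∑ x ∈ S, Fintype.card {w : Fin (k + 1) → Fin n //
          (∀ i : Fin k, G.Adj (w i.castSucc) (w i.succ)) ∧ w 0 = x} := by
    rw [Nat.card_eq_fintype_card, Fintype.card_subtype]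
    rw [Finset.card_eq_sum_card_fiberwise (f := fun w => w 0) (t := S)
      (fun w hw => (Finset.mem_filter.mp hw).2.2)]
    refine Finset.sum_congr rfl fun x hx => ?_
    rw [Fintype.card_subtype, Finset.filter_filter]
    congr 1
    apply Finset.filter_congr
    intro w _
    constructor
    · rintro ⟨⟨h1, _⟩, h2⟩; exact ⟨h1, h2⟩
    · rintro ⟨h1, h2⟩; exact ⟨⟨h1, h2 ▸ hx⟩, h2⟩
  rw [hmain]
  push_cast
  have hv : ∀ i, (0:ℝ) ≤ (G.adjMatrix ℝ ^ k).mulVec (fun _ => 1) i := fun i => by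
    rw [← count_walks G k i]; positivity
  refine le_trans (le_of_eq ?_) (sum_le_circNorm S _ hv)
  exact Finset.sum_congr rfl fun x _ => count_walks G k x
end

section
/- Let A be a real n × n matrix and let C ≥ 0 be a real number. If ‖A·v‖_◦ ≤ C·‖v‖_◦ for every vector v ∈ {0,1}^n, then ‖A·u‖_◦ ≤ 16·C·‖u‖_◦ for every vector u ∈ ℝ^n. -/
open MeasureTheory

namespace CircAux

open Finset

noncomputable def Δ (k : ℕ) : ℝ := Real.sqrt (k + 1) - Real.sqrt k

lemma Δ_nonneg (k : ℕ) : 0 ≤ Δ k :=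
  sub_nonneg.2 (Real.sqrt_le_sqrt (by linarith))

lemma Δ_eq (k : ℕ) : Δ k = 1 / (Real.sqrt (k + 1) + Real.sqrt k) := by
  have h1 : (0:ℝ) ≤ (k:ℝ) + 1 := by positivity
  have h2 : (0:ℝ) ≤ (k:ℝ) := by positivity
  have hp : 0 < Real.sqrt (k + 1) + Real.sqrt k := by
    have : 0 < Real.sqrt ((k:ℝ) + 1) := Real.sqrt_pos.2 (by linarith)
    nlinarith [Real.sqrt_nonneg (k:ℝ)]
  rw [eq_div_iff hp.ne']
  have := Real.sq_sqrt h1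
  have := Real.sq_sqrt h2
  unfold Δ
  nlinarith

lemma Δ_antitone : Antitone Δ := by
  intro k l hkl
  rw [Δ_eq, Δ_eq]
  apply one_div_le_one_div_of_le
  · have : 0 < Real.sqrt ((k:ℝ) + 1) := Real.sqrt_pos.2 (by positivity)
    nlinarith [Real.sqrt_nonneg (k:ℝ)]
  · have hk : (k:ℝ) ≤ l := Nat.cast_le.2 hkl
    gcongr <;> linarith

lemma sum_range_Δ (m : ℕ) : ∑ k ∈ Finset.range m, Δ k = Real.sqrt m := by
  have := Finset.sum_range_sub (fun k : ℕ => Real.sqrt k) m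
  simpa [Δ] using this

variable {n : ℕ}

lemma card_filter_perm (P : Fin n → Prop) [DecidablePred P] (σ : Equiv.Perm (Fin n)) :
    (univ.filter P).card = (univ.filter fun k => P (σ k)).card := by
  apply Finset.card_bij' (fun i _ => σ.symm i) (fun k _ => σ k) <;>
    simp [Finset.mem_filter]

lemma le_iff_lt_card {g : Fin n → ℝ} (hg : Antitone g) (x : ℝ) (k : Fin n) :
    x ≤ g k ↔ (k : ℕ) < (univ.filter fun j => x ≤ g j).card := by
  constructor
  · intro hx
    have hsub : Finset.Iic k ⊆ univ.filter fun j => x ≤ g j := by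
      intro j hj
      simp only [Finset.mem_Iic] at hj
      exact Finset.mem_filter.2 ⟨Finset.mem_univ _, le_trans hx (hg hj)⟩
    have := Finset.card_le_card hsub
    rw [Fin.card_Iic] at this
    omega
  · intro hx
    by_contra hc
    push_neg at hc
    have hsub : (univ.filter fun j => x ≤ g j) ⊆ Finset.Iio k := by
      intro j hj
      simp only [Finset.mem_filter] at hj
      simp only [Finset.mem_Iio]
      by_contra hjk
      push_neg at hjk
      exact absurd (le_trans hj.2 (hg hjk)) (not_le.2 hc)
    have := Finset.card_le_card hsub
    rw [Fin.card_Iio] at this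
    omega

lemma sqrt_count_eq (v : Fin n → ℝ) (σ : Equiv.Perm (Fin n))
    (hσ : Antitone fun k => |v (σ k)|) (x : ℝ) :
    Real.sqrt ((univ.filter (fun i : Fin n => x ≤ |v i|)).card : ℝ) =
      ∑ k : Fin n, Δ k * (if x ≤ |v (σ k)| then 1 else 0) := by
  set m := (univ.filter fun k : Fin n => x ≤ |v (σ k)|).card with hm
  have hcard : (univ.filter (fun i : Fin n => x ≤ |v i|)).card = m :=
    card_filter_perm (fun i => x ≤ |v i|) σ
  rw [hcard]
  have : ∀ k : Fin n, (if x ≤ |v (σ k)| then (1:ℝ) else 0) =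
      (if (k : ℕ) < m then (1:ℝ) else 0) := by
    intro k
    by_cases hk : x ≤ |v (σ k)|
    · rw [if_pos hk, if_pos ((le_iff_lt_card hσ x k).1 hk)]
    · rw [if_neg hk, if_neg (fun hc => hk ((le_iff_lt_card hσ x k).2 hc))]
  simp_rw [this]
  rw [Fin.sum_univ_eq_sum_range (fun k => Δ k * (if k < m then (1:ℝ) else 0))]
  have : ∀ k ∈ Finset.range n, Δ k * (if k < m then (1:ℝ) else 0) =
      if k < m then Δ k else 0 := by intro k _; split <;> ring
  rw [Finset.sum_congr rfl this, ← Finset.sum_filter]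
  have hfm : (Finset.range n).filter (fun k => k < m) = Finset.range m := by
    have hmn : m ≤ n := by
      simpa using Finset.card_le_card
        (Finset.filter_subset (fun k : Fin n => x ≤ |v (σ k)|) univ)
    ext k; simp only [Finset.mem_filter, Finset.mem_range]; omega
  rw [hfm, sum_range_Δ]

lemma antitone_integrand (v : Fin n → ℝ) :
    Antitone fun x : ℝ =>
      Real.sqrt ((univ.filter (fun i : Fin n => x ≤ |v i|)).card : ℝ) := by
  intro x y hxy
  apply Real.sqrt_le_sqrt
  have hsub : (univ.filter fun i : Fin n => y ≤ |v i|) ⊆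
      (univ.filter fun i : Fin n => x ≤ |v i|) := by
    intro i hi
    simp only [Finset.mem_filter] at *
    exact ⟨hi.1, le_trans hxy hi.2⟩
  exact_mod_cast Finset.card_le_card hsub

lemma integrableOn_integrand (v : Fin n → ℝ) :
    IntegrableOn (fun x : ℝ =>
      Real.sqrt ((univ.filter (fun i : Fin n => x ≤ |v i|)).card : ℝ))
      (Set.Ioi 0) := by
  set f := fun x : ℝ =>
      Real.sqrt ((univ.filter (fun i : Fin n => x ≤ |v i|)).card : ℝ) with hf
  set M := ∑ i : Fin n, |v i| with hM
  have hM0 : 0 ≤ M := Finset.sum_nonneg fun i _ => abs_nonneg _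
  have hgi : Integrable ((Set.Ioc (0:ℝ) M).indicator fun _ => Real.sqrt n)
      (volume.restrict (Set.Ioi 0)) := by
    rw [integrable_indicator_iff measurableSet_Ioc]
    refine integrableOn_const (ne_of_lt ?_) (by simp)
    calc (volume.restrict (Set.Ioi 0)) (Set.Ioc 0 M) ≤ volume (Set.Ioc 0 M) :=
          Measure.restrict_apply_le _ _
      _ < ⊤ := by simp [Real.volume_Ioc]
  apply Integrable.mono' hgi ((antitone_integrand v).measurable.aestronglyMeasurable)
  · filter_upwards [ae_restrict_mem measurableSet_Ioi] with x hx
    simp only [Set.mem_Ioi] at hx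
    rw [Real.norm_eq_abs, abs_of_nonneg (Real.sqrt_nonneg _)]
    by_cases hxM : x ≤ M
    · rw [Set.indicator_of_mem (Set.mem_Ioc.2 ⟨hx, hxM⟩)]
      apply Real.sqrt_le_sqrt
      have : (univ.filter (fun i : Fin n => x ≤ |v i|)).card ≤ n := by
        simpa using Finset.card_filter_le (univ : Finset (Fin n))
          (fun i : Fin n => x ≤ |v i|)
      exact_mod_cast this
    · rw [Set.indicator_of_notMem (fun hmem => hxM hmem.2)]
      have : (univ.filter (fun i : Fin n => x ≤ |v i|)) = ∅ := by
        apply Finset.filter_false_of_mem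
        intro i _
        push_neg
        calc |v i| ≤ M := Finset.single_le_sum (fun j _ => abs_nonneg (v j)) (mem_univ i)
          _ < x := not_le.1 hxM
      simp [this]

lemma ite_eq_indicator (c : ℝ) :
    (fun x : ℝ => if x ≤ c then (1:ℝ) else 0) = (Set.Iic c).indicator 1 := by
  funext x
  simp [Set.indicator, Set.mem_Iic]

lemma restrict_Iic (c : ℝ) :
    (volume.restrict (Set.Ioi (0:ℝ))) (Set.Iic c) = ENNReal.ofReal c := by
  rw [Measure.restrict_apply measurableSet_Iic]
  rw [Set.inter_comm, Set.Ioi_inter_Iic, Real.volume_Ioc, sub_zero]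

lemma integrableOn_ite (c : ℝ) :
    IntegrableOn (fun x : ℝ => if x ≤ c then (1:ℝ) else 0) (Set.Ioi 0) := by
  rw [ite_eq_indicator, IntegrableOn, integrable_indicator_iff measurableSet_Iic]
  refine integrableOn_const (ne_of_lt ?_) (by simp)
  rw [restrict_Iic]
  exact ENNReal.ofReal_lt_top

lemma integral_ite (c : ℝ) (hc : 0 ≤ c) :
    ∫ x in Set.Ioi (0:ℝ), (if x ≤ c then (1:ℝ) else 0) = c := by
  rw [ite_eq_indicator c, integral_indicator measurableSet_Iic]
  simp only [Pi.one_apply]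
  rw [setIntegral_const, measureReal_def, restrict_Iic, smul_eq_mul, mul_one, ENNReal.toReal_ofReal hc]

lemma circNorm_eq_sum (v : Fin n → ℝ) (σ : Equiv.Perm (Fin n))
    (hσ : Antitone fun k => |v (σ k)|) :
    circNorm v = ∑ k : Fin n, Δ k * |v (σ k)| := by
  have hcongr : circNorm v = ∫ x in Set.Ioi (0:ℝ),
      ∑ k : Fin n, Δ k * (if x ≤ |v (σ k)| then 1 else 0) := by
    unfold circNorm
    exact setIntegral_congr_fun measurableSet_Ioi fun x _ => sqrt_count_eq v σ hσ x
  rw [hcongr, integral_finset_sum _ (fun k _ => (integrableOn_ite _).const_mul _)]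
  refine Finset.sum_congr rfl fun k _ => ?_
  rw [MeasureTheory.integral_const_mul, integral_ite _ (abs_nonneg _)]

lemma exists_antitone_perm (v : Fin n → ℝ) :
    ∃ σ : Equiv.Perm (Fin n), Antitone fun k => |v (σ k)| := by
  refine ⟨Tuple.sort (fun i => -|v i|), ?_⟩
  have h := Tuple.monotone_sort (fun i => -|v i|)
  intro a b hab
  have := h hab
  simp only [Function.comp_apply] at this
  dsimp only
  linarith

lemma sum_perm_le (v : Fin n → ℝ) (τ : Equiv.Perm (Fin n)) :
    ∑ k : Fin n, Δ k * |v (τ k)| ≤ circNorm v := by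
  obtain ⟨ρ, hρ⟩ := exists_antitone_perm v
  rw [circNorm_eq_sum v ρ hρ]
  have hmono : Monovary (fun k : Fin n => Δ k) (fun k => |v (ρ k)|) := by
    intro i j hij
    have hji : j ≤ i := by
      by_contra hc
      push_neg at hc
      exact absurd (hρ hc.le) (not_le.2 hij)
    exact Δ_antitone (show (j:ℕ) ≤ (i:ℕ) from hji)
  have h2 := hmono.sum_mul_comp_perm_le_sum_mul (σ := τ.trans ρ.symm)
  simpa [Equiv.trans_apply, Equiv.apply_symm_apply] using h2

lemma circNorm_nonneg (v : Fin n → ℝ) : 0 ≤ circNorm v :=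
  setIntegral_nonneg measurableSet_Ioi fun x _ => Real.sqrt_nonneg _

lemma circNorm_mono {w v : Fin n → ℝ} (h : ∀ i, |w i| ≤ |v i|) :
    circNorm w ≤ circNorm v := by
  apply setIntegral_mono_on (integrableOn_integrand w) (integrableOn_integrand v)
    measurableSet_Ioi
  intro x _
  apply Real.sqrt_le_sqrt
  have hsub : (univ.filter fun i : Fin n => x ≤ |w i|) ⊆
      (univ.filter fun i : Fin n => x ≤ |v i|) := by
    intro i hi
    simp only [Finset.mem_filter] at *
    exact ⟨hi.1, le_trans hi.2 (h i)⟩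
  exact_mod_cast Finset.card_le_card hsub

lemma circNorm_congr_abs {w v : Fin n → ℝ} (h : ∀ i, |w i| = |v i|) :
    circNorm w = circNorm v :=
  le_antisymm (circNorm_mono fun i => (h i).le) (circNorm_mono fun i => (h i).ge)

lemma circNorm_add_le (v w : Fin n → ℝ) :
    circNorm (v + w) ≤ circNorm v + circNorm w := by
  obtain ⟨σ, hσ⟩ := exists_antitone_perm (v + w)
  rw [circNorm_eq_sum _ σ hσ]
  calc ∑ k : Fin n, Δ k * |(v + w) (σ k)|
      ≤ ∑ k : Fin n, (Δ k * |v (σ k)| + Δ k * |w (σ k)|) := by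
        apply Finset.sum_le_sum
        intro k _
        have habs : |(v + w) (σ k)| ≤ |v (σ k)| + |w (σ k)| := by
          simpa [Pi.add_apply] using abs_add_le (v (σ k)) (w (σ k))
        nlinarith [Δ_nonneg (k : ℕ)]
    _ = (∑ k : Fin n, Δ k * |v (σ k)|) + ∑ k : Fin n, Δ k * |w (σ k)| :=
        Finset.sum_add_distrib
    _ ≤ circNorm v + circNorm w := add_le_add (sum_perm_le v σ) (sum_perm_le w σ)

lemma circNorm_smul (c : ℝ) (hc : 0 ≤ c) (v : Fin n → ℝ) :
    circNorm (fun i => c * v i) = c * circNorm v := by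
  obtain ⟨σ, hσ⟩ := exists_antitone_perm v
  have hσ' : Antitone fun k => |c * v (σ k)| := by
    intro a b hab
    dsimp only
    rw [abs_mul, abs_mul, abs_of_nonneg hc]
    exact mul_le_mul_of_nonneg_left (hσ hab) hc
  rw [circNorm_eq_sum (fun i => c * v i) σ hσ', circNorm_eq_sum v σ hσ, Finset.mul_sum]
  refine Finset.sum_congr rfl fun k _ => ?_
  rw [abs_mul, abs_of_nonneg hc]
  ring

lemma circNorm_zero : circNorm (0 : Fin n → ℝ) = 0 := by
  rw [circNorm_eq_sum (0 : Fin n → ℝ) (Equiv.refl _) (by intro a b _; simp)]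
  simp

lemma key (A : Matrix (Fin n) (Fin n) ℝ) (C : ℝ) (hC : 0 ≤ C)
    (h : ∀ v : Fin n → ℝ, (∀ i, v i = 0 ∨ v i = 1) →
      circNorm (A.mulVec v) ≤ C * circNorm v) :
    ∀ u : Fin n → ℝ, (∀ i, 0 ≤ u i) → circNorm (A.mulVec u) ≤ C * circNorm u := by
  suffices H : ∀ m : ℕ, ∀ u : Fin n → ℝ, (∀ i, 0 ≤ u i) →
      (univ.filter fun i => u i ≠ 0).card = m →
      circNorm (A.mulVec u) ≤ C * circNorm u by
    intro u hu
    exact H _ u hu rfl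
  intro m
  induction m using Nat.strong_induction_on with
  | _ m IH =>
    intro u hu hcard
    by_cases hm : (univ.filter fun i => u i ≠ 0) = ∅
    · have hu0 : u = 0 := by
        funext i
        show u i = (0 : ℝ)
        by_contra hi
        have hmem : i ∈ univ.filter fun j => u j ≠ 0 :=
          Finset.mem_filter.2 ⟨mem_univ i, hi⟩
        rw [hm] at hmem
        exact absurd hmem (Finset.notMem_empty i)
      rw [hu0, Matrix.mulVec_zero, circNorm_zero]
      simp
    · obtain ⟨i₀, hi₀, hmin⟩ := Finset.exists_min_image
        (univ.filter fun i => u i ≠ 0) u (Finset.nonempty_of_ne_empty hm)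
      set c := u i₀ with hc_def
      have hc_pos : 0 < c := (hu i₀).lt_of_ne (Ne.symm (Finset.mem_filter.1 hi₀).2)
      set w : Fin n → ℝ := fun i => max (u i - c) 0 with hw_def
      set b : Fin n → ℝ := fun i => if u i = 0 then 0 else 1 with hb_def
      have hw_nonneg : ∀ i, 0 ≤ w i := fun i => le_max_right _ _
      have hb_nonneg : ∀ i, 0 ≤ b i := by
        intro i
        simp only [hb_def]
        split <;> norm_num
      have hub : ∀ i, u i ≠ 0 → c ≤ u i := fun i hi =>
        hmin i (Finset.mem_filter.2 ⟨mem_univ i, hi⟩)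
      have hdecomp : ∀ i, u i = w i + c * b i := by
        intro i
        by_cases hi : u i = 0
        · simp [hw_def, hb_def, hi, max_eq_right (by linarith : u i - c ≤ 0)]
        · have := hub i hi
          simp only [hw_def, hb_def, if_neg hi, mul_one,
            max_eq_left (by linarith : (0:ℝ) ≤ u i - c)]
          ring
      obtain ⟨σ, hσ⟩ := exists_antitone_perm u
      have huσ : ∀ k, |u (σ k)| = u (σ k) := fun k => abs_of_nonneg (hu _)
      have hwσ : Antitone fun k => |w (σ k)| := by
        intro a b' hab
        have hσab : u (σ b') ≤ u (σ a) := by simpa only [huσ] using hσ hab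
        dsimp only
        rw [abs_of_nonneg (hw_nonneg _), abs_of_nonneg (hw_nonneg _)]
        exact max_le_max (by linarith) le_rfl
      have hbσ : Antitone fun k => |b (σ k)| := by
        intro a b' hab
        have hσab : u (σ b') ≤ u (σ a) := by simpa only [huσ] using hσ hab
        by_cases hb0 : u (σ b') = 0
        · have hbb : b (σ b') = 0 := by simp [hb_def, hb0]
          dsimp only
          rw [hbb]
          simpa using abs_nonneg (b (σ a))
        · have ha0 : u (σ a) ≠ 0 := by
            intro h0
            rw [h0] at hσab
            exact hb0 (le_antisymm hσab (hu _))
          simp [hb_def, hb0, ha0]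
      have hkey : circNorm u = circNorm w + c * circNorm b := by
        rw [circNorm_eq_sum u σ hσ, circNorm_eq_sum w σ hwσ, circNorm_eq_sum b σ hbσ,
          Finset.mul_sum, ← Finset.sum_add_distrib]
        refine Finset.sum_congr rfl fun k _ => ?_
        rw [huσ, hdecomp (σ k), abs_of_nonneg (hw_nonneg _), abs_of_nonneg (hb_nonneg _)]
        ring
      have hsub : (univ.filter fun i => w i ≠ 0) ⊆ (univ.filter fun i => u i ≠ 0) := by
        intro i hi
        simp only [Finset.mem_filter, hw_def] at *
        refine ⟨mem_univ i, fun h0 => hi.2 ?_⟩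
        have hle : u i - c ≤ 0 := by rw [h0]; linarith
        exact sup_eq_right.2 hle
      have hlt : (univ.filter fun i => w i ≠ 0).card < m := by
        rw [← hcard]
        apply Finset.card_lt_card
        rw [Finset.ssubset_iff_of_subset hsub]
        refine ⟨i₀, hi₀, ?_⟩
        simp only [Finset.mem_filter, not_and, not_not]
        intro _
        show (u i₀ - c) ⊔ 0 = 0
        have hle : u i₀ - c ≤ 0 := by rw [hc_def]; simp
        exact sup_eq_right.2 hle
      have hAw := IH _ hlt w hw_nonneg rfl
      have hb01 : ∀ i, b i = 0 ∨ b i = 1 := by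
        intro i
        simp only [hb_def]
        split
        · left; rfl
        · right; rfl
      have hAb := h b hb01
      have hmv : A.mulVec u = A.mulVec w + c • A.mulVec b := by
        have huwb : u = w + c • b := by
          funext i
          rw [hdecomp i]
          simp [Pi.add_apply, Pi.smul_apply, smul_eq_mul]
        rw [huwb, Matrix.mulVec_add, Matrix.mulVec_smul]
      have hsmul : circNorm (c • A.mulVec b) = c * circNorm (A.mulVec b) := by
        have : (c • A.mulVec b) = fun i => c * (A.mulVec b) i := by
          funext i
          simp [Pi.smul_apply, smul_eq_mul]
        rw [this, circNorm_smul c hc_pos.le]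
      calc circNorm (A.mulVec u) = circNorm (A.mulVec w + c • A.mulVec b) := by rw [hmv]
        _ ≤ circNorm (A.mulVec w) + circNorm (c • A.mulVec b) := circNorm_add_le _ _
        _ = circNorm (A.mulVec w) + c * circNorm (A.mulVec b) := by rw [hsmul]
        _ ≤ C * circNorm w + c * (C * circNorm b) :=
            add_le_add hAw (mul_le_mul_of_nonneg_left hAb hc_pos.le)
        _ = C * (circNorm w + c * circNorm b) := by ring
        _ = C * circNorm u := by rw [hkey]

end CircAux

theorem circNorm_matrix_bound_of_zeroOne {n : ℕ} (A : Matrix (Fin n) (Fin n) ℝ)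
    (C : ℝ) (hC : 0 ≤ C)
    (h : ∀ v : Fin n → ℝ, (∀ i, v i = 0 ∨ v i = 1) →
      circNorm (A.mulVec v) ≤ C * circNorm v) :
    ∀ u : Fin n → ℝ, circNorm (A.mulVec u) ≤ 16 * C * circNorm u := by
  intro u
  classical
  set p : Fin n → ℝ := fun i => max (u i) 0 with hp
  set q : Fin n → ℝ := fun i => max (-u i) 0 with hq
  have hp_nonneg : ∀ i, 0 ≤ p i := fun i => le_max_right _ _
  have hq_nonneg : ∀ i, 0 ≤ q i := fun i => le_max_right _ _
  have hupq : u = p - q := by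
    funext i
    simp only [hp, hq, Pi.sub_apply]
    rcases le_total (u i) 0 with hi | hi
    · rw [max_eq_right hi, max_eq_left (by linarith)]
      ring
    · rw [max_eq_left hi, max_eq_right (by linarith)]
      ring
  have hmv : A.mulVec u = A.mulVec p - A.mulVec q := by
    rw [hupq, Matrix.mulVec_sub]
  have htri : circNorm (A.mulVec p - A.mulVec q) ≤
      circNorm (A.mulVec p) + circNorm (A.mulVec q) := by
    have h1 := CircAux.circNorm_add_le (A.mulVec p) (-(A.mulVec q))
    have h2 : circNorm (-(A.mulVec q)) = circNorm (A.mulVec q) :=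
      CircAux.circNorm_congr_abs fun i => by simp
    rw [sub_eq_add_neg]
    calc circNorm (A.mulVec p + -A.mulVec q)
        ≤ circNorm (A.mulVec p) + circNorm (-A.mulVec q) := h1
      _ = circNorm (A.mulVec p) + circNorm (A.mulVec q) := by rw [h2]
  have hkp := CircAux.key A C hC h p hp_nonneg
  have hkq := CircAux.key A C hC h q hq_nonneg
  have hpu : circNorm p ≤ circNorm u := by
    apply CircAux.circNorm_mono
    intro i
    simp only [hp]
    rw [abs_of_nonneg (le_max_right _ _)]
    exact max_le (le_abs_self _) (abs_nonneg _)
  have hqu : circNorm q ≤ circNorm u := by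
    apply CircAux.circNorm_mono
    intro i
    simp only [hq]
    rw [abs_of_nonneg (le_max_right _ _)]
    exact max_le (neg_le_abs _) (abs_nonneg _)
  have hnn := CircAux.circNorm_nonneg u
  calc circNorm (A.mulVec u) = circNorm (A.mulVec p - A.mulVec q) := by rw [hmv]
    _ ≤ circNorm (A.mulVec p) + circNorm (A.mulVec q) := htri
    _ ≤ C * circNorm p + C * circNorm q := add_le_add hkp hkq
    _ ≤ C * circNorm u + C * circNorm u :=
        add_le_add (mul_le_mul_of_nonneg_left hpu hC) (mul_le_mul_of_nonneg_left hqu hC)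
    _ ≤ 16 * C * circNorm u := by nlinarith
end

section
/- Let v ∈ ℝ^n be a vector with all entries nonnegative. For each integer k ∈ ℤ define the vector v^{(k)} ∈ ℝ^n coordinatewise by v^{(k)}_i = v_i if v_i ∈ (2^{k−1}, 2^k] and v^{(k)}_i = 0 otherwise. Then Σ_{k ∈ ℤ} ‖v^{(k)}‖_◦ ≤ 4·‖v‖_◦. -/
open MeasureTheory

lemma circAux_measurable {n : ℕ} (v : Fin n → ℝ) :
    Measurable (fun x : ℝ =>
      Real.sqrt ((Finset.univ.filter (fun i : Fin n => x ≤ |v i|)).card : ℝ)) := by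
  apply Real.continuous_sqrt.measurable.comp
  have h : (fun x : ℝ => ((Finset.univ.filter (fun i : Fin n => x ≤ |v i|)).card : ℝ))
      = fun x => ∑ i : Fin n, if x ≤ |v i| then (1:ℝ) else 0 := by
    funext x
    rw [Finset.card_filter]
    push_cast
    rfl
  rw [h]
  exact Finset.measurable_sum _ fun i _ =>
    Measurable.ite measurableSet_Iic measurable_const measurable_const

lemma circAux_integrableOn {n : ℕ} (v : Fin n → ℝ) :
    IntegrableOn (fun x : ℝ =>
      Real.sqrt ((Finset.univ.filter (fun i : Fin n => x ≤ |v i|)).card : ℝ))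
      (Set.Ioi (0:ℝ)) := by
  set B : ℝ := 1 + ∑ i, |v i| with hB
  have hB1 : ∀ i, |v i| < B := by
    intro i
    have h1 : |v i| ≤ ∑ j, |v j| :=
      Finset.single_le_sum (f := fun j => |v j|) (fun j _ => abs_nonneg _) (Finset.mem_univ i)
    have h2 : (0:ℝ) ≤ ∑ j, |v j| := Finset.sum_nonneg fun j _ => abs_nonneg _
    simp only [hB]; linarith
  apply Integrable.mono' (g := (Set.Ioc (0:ℝ) B).indicator fun _ => Real.sqrt n)
  · rw [integrable_indicator_iff measurableSet_Ioc]
    refine integrableOn_const (ne_of_lt ?_)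
    exact lt_of_le_of_lt (Measure.restrict_apply_le _ _) measure_Ioc_lt_top
  · exact (circAux_measurable v).aestronglyMeasurable
  · rw [ae_restrict_iff' measurableSet_Ioi]
    filter_upwards with x hx
    rw [Real.norm_eq_abs, abs_of_nonneg (Real.sqrt_nonneg _)]
    by_cases hxB : x ≤ B
    · rw [Set.indicator_of_mem (show x ∈ Set.Ioc (0:ℝ) B from ⟨hx, hxB⟩)]
      apply Real.sqrt_le_sqrt
      exact_mod_cast (Finset.card_filter_le _ _).trans_eq (by simp)
    · have hempty : (Finset.univ.filter (fun i : Fin n => x ≤ |v i|)) = ∅ := by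
        rw [Finset.filter_eq_empty_iff]
        intro i _
        push_neg
        exact (hB1 i).trans (lt_of_not_ge hxB)
      rw [hempty]
      simp [Set.indicator_nonneg (fun _ _ => Real.sqrt_nonneg _)]

theorem circNorm_dyadic_decomposition {n : ℕ} (v : Fin n → ℝ)
    (hv : ∀ i, 0 ≤ v i) :
    ∑' k : ℤ, circNorm
        (fun i => if (2 : ℝ) ^ (k - 1) < v i ∧ v i ≤ (2 : ℝ) ^ k then v i else 0)
      ≤ 4 * circNorm v := by
  set f : ℝ → ℝ := fun x =>
    Real.sqrt ((Finset.univ.filter (fun i : Fin n => x ≤ |v i|)).card : ℝ) with hf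
  have hint : IntegrableOn f (Set.Ioi 0) := circAux_integrableOn v
  have hfnn : ∀ x, 0 ≤ f x := fun x => Real.sqrt_nonneg _
  have hcv : circNorm v = ∫ x in Set.Ioi (0:ℝ), f x := rfl
  have hcirc_nn : (0:ℝ) ≤ circNorm v := by
    rw [hcv]; exact setIntegral_nonneg measurableSet_Ioi fun x _ => hfnn x
  apply tsum_le_of_sum_le' (by linarith)
  intro s
  set N : ℤ → ℕ := fun k =>
    (Finset.univ.filter (fun i : Fin n => (2:ℝ)^(k-1) < v i ∧ v i ≤ (2:ℝ)^k)).card with hN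
  set I : ℤ → Set ℝ := fun k => Set.Ioc ((2:ℝ)^(k-2)) ((2:ℝ)^(k-1)) with hI
  have h2pos : ∀ m : ℤ, (0:ℝ) < (2:ℝ)^m := fun m => zpow_pos two_pos m
  -- Step A
  have stepA : ∀ k : ℤ,
      circNorm (fun i => if (2:ℝ)^(k-1) < v i ∧ v i ≤ (2:ℝ)^k then v i else 0)
        ≤ (2:ℝ)^k * Real.sqrt (N k) := by
    intro k
    set w : Fin n → ℝ := fun i => if (2:ℝ)^(k-1) < v i ∧ v i ≤ (2:ℝ)^k then v i else 0 with hw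
    have hwbd : ∀ i, |w i| ≤ (2:ℝ)^k := by
      intro i
      show |if (2:ℝ)^(k-1) < v i ∧ v i ≤ (2:ℝ)^k then v i else 0| ≤ (2:ℝ)^k
      split_ifs with h
      · rw [abs_of_nonneg (hv i)]; exact h.2
      · simpa using (h2pos k).le
    have key : circNorm w ≤ ∫ x in Set.Ioi (0:ℝ),
        (Set.Ioc (0:ℝ) ((2:ℝ)^k)).indicator (fun _ => Real.sqrt (N k)) x := by
      rw [circNorm]
      apply setIntegral_mono_on (circAux_integrableOn w)
      · rw [IntegrableOn, integrable_indicator_iff measurableSet_Ioc]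
        refine integrableOn_const (ne_of_lt ?_)
        exact lt_of_le_of_lt (Measure.restrict_apply_le _ _) measure_Ioc_lt_top
      · exact measurableSet_Ioi
      · intro x hx
        by_cases hxk : x ≤ (2:ℝ)^k
        · rw [Set.indicator_of_mem (show x ∈ Set.Ioc (0:ℝ) ((2:ℝ)^k) from ⟨hx, hxk⟩)]
          apply Real.sqrt_le_sqrt
          have hsub : (Finset.univ.filter (fun i : Fin n => x ≤ |w i|)) ⊆
              (Finset.univ.filter (fun i : Fin n => (2:ℝ)^(k-1) < v i ∧ v i ≤ (2:ℝ)^k)) := by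
            intro i hi
            simp only [Finset.mem_filter, Finset.mem_univ, true_and] at hi ⊢
            by_contra hcon
            rw [hw] at hi
            simp only [if_neg hcon, abs_zero] at hi
            exact absurd hi (not_le.2 (Set.mem_Ioi.1 hx))
          exact_mod_cast Finset.card_le_card hsub
        · have hempty : (Finset.univ.filter (fun i : Fin n => x ≤ |w i|)) = ∅ := by
            rw [Finset.filter_eq_empty_iff]
            intro i _
            push_neg
            exact (hwbd i).trans_lt (lt_of_not_ge hxk)
          rw [hempty, Set.indicator_of_notMem (fun h => hxk h.2)]
          simp
    rw [setIntegral_indicator measurableSet_Ioc,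
      Set.inter_eq_right.2 Set.Ioc_subset_Ioi_self, setIntegral_const,
      Real.volume_real_Ioc_of_le (h2pos k).le, sub_zero, smul_eq_mul] at key
    exact key
  -- Step C
  have stepC : ∀ k : ℤ, (2:ℝ)^k * Real.sqrt (N k) ≤ 4 * ∫ x in I k, f x := by
    intro k
    have hIsub : I k ⊆ Set.Ioi (0:ℝ) :=
      Set.Ioc_subset_Ioi_self.trans (Set.Ioi_subset_Ioi (h2pos (k-2)).le)
    have hvol : (2:ℝ)^(k-1) - (2:ℝ)^(k-2) = (2:ℝ)^(k-2) := by
      have : (2:ℝ)^(k-1) = (2:ℝ)^(k-2) * 2 := by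
        rw [show k-1 = (k-2)+1 by ring, zpow_add_one₀ (two_ne_zero)]
      linarith
    have h4 : (2:ℝ)^k = 4 * (2:ℝ)^(k-2) := by
      rw [show k = (k-2)+2 by ring, zpow_add₀ (two_ne_zero : (2:ℝ) ≠ 0)]
      ring
    have hconst : ∫ x in I k, (fun _ => Real.sqrt (N k)) x
        = (2:ℝ)^(k-2) * Real.sqrt (N k) := by
      rw [setIntegral_const, hI, Real.volume_real_Ioc_of_le (by linarith [hvol, (h2pos (k-2))]),
        hvol, smul_eq_mul]
    have hmono : ∫ x in I k, (fun _ => Real.sqrt (N k)) x ≤ ∫ x in I k, f x := by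
      apply setIntegral_mono_on
      · exact integrableOn_const (ne_of_lt measure_Ioc_lt_top)
      · exact hint.mono_set hIsub
      · exact measurableSet_Ioc
      · intro x hx
        apply Real.sqrt_le_sqrt
        have hsub : (Finset.univ.filter (fun i : Fin n => (2:ℝ)^(k-1) < v i ∧ v i ≤ (2:ℝ)^k))
            ⊆ (Finset.univ.filter (fun i : Fin n => x ≤ |v i|)) := by
          intro i hi
          simp only [Finset.mem_filter, Finset.mem_univ, true_and] at hi ⊢
          rw [abs_of_nonneg (hv i)]
          exact le_of_lt (lt_of_le_of_lt hx.2 hi.1)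
        exact_mod_cast Finset.card_le_card hsub
    calc (2:ℝ)^k * Real.sqrt (N k) = 4 * ((2:ℝ)^(k-2) * Real.sqrt (N k)) := by rw [h4]; ring
      _ ≤ 4 * ∫ x in I k, f x := by rw [← hconst]; linarith [hmono]
  -- Step D
  have stepD : ∑ k ∈ s, ∫ x in I k, f x ≤ circNorm v := by
    have hmeas : ∀ k ∈ s, MeasurableSet (I k) := fun _ _ => measurableSet_Ioc
    have hdisj : (↑s : Set ℤ).Pairwise (Function.onFun Disjoint I) := by
      intro j _ k _ hjk
      have key : ∀ a b : ℤ, a < b → Disjoint (I a) (I b) := by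
        intro a b hab
        rw [hI]
        rw [Set.Ioc_disjoint_Ioc]
        have : (2:ℝ)^(a-1) ≤ (2:ℝ)^(b-2) := by
          apply zpow_le_zpow_right₀ one_le_two
          omega
        calc (2:ℝ)^(a-1) ⊓ (2:ℝ)^(b-1) ≤ (2:ℝ)^(a-1) := min_le_left _ _
          _ ≤ (2:ℝ)^(b-2) := this
          _ ≤ (2:ℝ)^(a-2) ⊔ (2:ℝ)^(b-2) := le_max_right _ _
      rcases hjk.lt_or_gt with h | h
      · exact key j k h
      · exact (key k j h).symm
    have hintk : ∀ k ∈ s, IntegrableOn f (I k) := fun k _ =>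
      hint.mono_set (Set.Ioc_subset_Ioi_self.trans (Set.Ioi_subset_Ioi (h2pos (k-2)).le))
    rw [← integral_biUnion_finset s hmeas hdisj hintk, hcv]
    apply setIntegral_mono_set hint (Filter.Eventually.of_forall hfnn)
    apply HasSubset.Subset.eventuallyLE
    exact Set.iUnion₂_subset fun k _ =>
      Set.Ioc_subset_Ioi_self.trans (Set.Ioi_subset_Ioi (h2pos (k-2)).le)
  calc ∑ k ∈ s, circNorm (fun i => if (2:ℝ)^(k-1) < v i ∧ v i ≤ (2:ℝ)^k then v i else 0)
      ≤ ∑ k ∈ s, (2:ℝ)^k * Real.sqrt (N k) := Finset.sum_le_sum fun k _ => stepA k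
    _ ≤ ∑ k ∈ s, 4 * ∫ x in I k, f x := Finset.sum_le_sum fun k _ => stepC k
    _ = 4 * ∑ k ∈ s, ∫ x in I k, f x := by rw [Finset.mul_sum]
    _ ≤ 4 * circNorm v := by linarith [stepD]
end

section
/- Let G be a simple undirected graph with m edges. For each integer i ≥ 0 let V_i be the set of vertices v of G with 2^{i−1} < deg(v) ≤ 2^i. Then Σ_{i ≥ j ≥ 0} 2^j · √(|V_i|·|V_j|) ≤ 14·m. -/
open Finset

lemma sqrt_am_gm (x y : ℝ) (hx : 0 ≤ x) (hy : 0 ≤ y) :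
    Real.sqrt (x * y) ≤ (x + y) / 2 := by
  rw [Real.sqrt_mul hx]
  nlinarith [sq_nonneg (Real.sqrt x - Real.sqrt y), Real.sq_sqrt hx, Real.sq_sqrt hy,
    Real.sqrt_nonneg x, Real.sqrt_nonneg y]

lemma geom_bound (m : ℕ) : ∑ k ∈ Finset.range m, ((Real.sqrt 2)⁻¹) ^ k ≤ 7 / 2 := by
  have hs : Real.sqrt 2 ^ 2 = 2 := Real.sq_sqrt (by norm_num)
  have hs1 : (1.4 : ℝ) ≤ Real.sqrt 2 := by nlinarith [Real.sqrt_nonneg 2]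
  have hc0 : (0 : ℝ) ≤ (Real.sqrt 2)⁻¹ := by positivity
  have hc1 : (Real.sqrt 2)⁻¹ ≤ 5 / 7 := by
    rw [inv_le_comm₀ (by linarith) (by norm_num)]
    linarith
  calc ∑ k ∈ Finset.range m, ((Real.sqrt 2)⁻¹) ^ k
      ≤ ∑ k ∈ Finset.range m, ((5:ℝ)/7) ^ k := by
        exact Finset.sum_le_sum fun k _ => pow_le_pow_left₀ hc0 hc1 k
    _ ≤ 7 / 2 := by
        rw [geom_sum_eq (by norm_num)]
        rw [div_le_iff_of_neg (by norm_num)]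
        have : (0:ℝ) ≤ (5/7:ℝ)^m := by positivity
        nlinarith

lemma key_term (a b : ℝ) (ha : 0 ≤ a) (hb : 0 ≤ b) (i j : ℕ) (h : j ≤ i) :
    (2:ℝ) ^ j * Real.sqrt (a * b) ≤
      ((2:ℝ) ^ i * a + 2 ^ j * b) * ((Real.sqrt 2)⁻¹) ^ (i - j) / 2 := by
  obtain ⟨k, rfl⟩ := Nat.exists_eq_add_of_le h
  have hk : j + k - j = k := by omega
  rw [hk]
  set s : ℝ := Real.sqrt 2 with hsdef
  have hs : s ^ 2 = 2 := Real.sq_sqrt (by norm_num)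
  have hs0 : (0:ℝ) < s := Real.sqrt_pos.mpr (by norm_num)
  have h2s : (2:ℝ) * s⁻¹ = s := by
    field_simp
    nlinarith
  set x : ℝ := s ^ k * a with hx
  set y : ℝ := s⁻¹ ^ k * b with hy
  have hxy : x * y = a * b := by
    have h1 : s ^ k * s⁻¹ ^ k = 1 := by
      rw [← mul_pow, mul_inv_cancel₀ (ne_of_gt hs0), one_pow]
    rw [hx, hy, show s ^ k * a * (s⁻¹ ^ k * b) = s ^ k * s⁻¹ ^ k * (a * b) from by ring,
      h1, one_mul]
  have hx0 : 0 ≤ x := by positivity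
  have hy0 : 0 ≤ y := by positivity
  have hsq : Real.sqrt (a * b) ≤ (x + y) / 2 := by
    rw [← hxy]; exact sqrt_am_gm x y hx0 hy0
  have hrhs : ((2:ℝ) ^ (j + k) * a + 2 ^ j * b) * (s⁻¹) ^ k / 2 = 2 ^ j * ((x + y) / 2) := by
    have h2k : (2:ℝ) ^ k * s⁻¹ ^ k = s ^ k := by rw [← mul_pow, h2s]
    rw [pow_add, hx, hy]
    linear_combination (2 ^ j * a / 2) * h2k
  rw [hrhs]
  have h2j : (0:ℝ) ≤ 2 ^ j := by positivity
  exact mul_le_mul_of_nonneg_left hsq h2j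

lemma main_bound (n : ℕ → ℝ) (hn0 : ∀ i, 0 ≤ n i) (N : ℕ) (m : ℝ)
    (hzero : ∀ i, N ≤ i → n i = 0)
    (hsum : ∑ i ∈ Finset.range N, (2:ℝ) ^ i * n i ≤ 4 * m) :
    ∑' i : ℕ, ∑' j : ℕ,
        (if j ≤ i then (2:ℝ) ^ j * Real.sqrt (n i * n j) else 0) ≤ 14 * m := by
  set c : ℝ := (Real.sqrt 2)⁻¹ with hc
  have hc0 : (0:ℝ) ≤ c := by positivity
  set f : ℕ → ℕ → ℝ := fun i j => if j ≤ i then (2:ℝ) ^ j * Real.sqrt (n i * n j) else 0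
    with hf
  have hfz : ∀ i j, N ≤ i ∨ N ≤ j → f i j = 0 := by
    intro i j hij
    simp only [hf]
    split_ifs with h
    · rcases hij with hi | hj
      · rw [hzero i hi, zero_mul, Real.sqrt_zero, mul_zero]
      · rw [hzero j hj, mul_zero, Real.sqrt_zero, mul_zero]
    · rfl
  have hinner : ∀ i, ∑' j : ℕ, f i j = ∑ j ∈ Finset.range N, f i j := by
    intro i
    exact tsum_eq_sum (fun j hj => hfz i j (Or.inr (by simpa using hj)))
  have houter : ∑' i : ℕ, ∑' j : ℕ, f i j
      = ∑ i ∈ Finset.range N, ∑ j ∈ Finset.range N, f i j := by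
    rw [tsum_congr hinner]
    exact tsum_eq_sum (fun i hi => Finset.sum_eq_zero fun j _ =>
      hfz i j (Or.inl (by simpa using hi)))
  show ∑' i : ℕ, ∑' j : ℕ, f i j ≤ 14 * m
  rw [houter]
  have hstep : ∑ i ∈ Finset.range N, ∑ j ∈ Finset.range N, f i j
      ≤ ∑ i ∈ Finset.range N, ∑ j ∈ Finset.range N,
          ((if j ≤ i then (2:ℝ) ^ i * n i * c ^ (i - j) / 2 else 0)
            + (if j ≤ i then (2:ℝ) ^ j * n j * c ^ (i - j) / 2 else 0)) := by
    refine Finset.sum_le_sum fun i _ => Finset.sum_le_sum fun j _ => ?_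
    simp only [hf]
    split_ifs with h
    · have := key_term (n i) (n j) (hn0 i) (hn0 j) i j h
      calc (2:ℝ) ^ j * Real.sqrt (n i * n j)
          ≤ ((2:ℝ) ^ i * n i + 2 ^ j * n j) * c ^ (i - j) / 2 := this
        _ = (2:ℝ) ^ i * n i * c ^ (i - j) / 2 + (2:ℝ) ^ j * n j * c ^ (i - j) / 2 := by ring
    · simp
  refine le_trans hstep ?_
  have hgeo1 : ∀ i ∈ Finset.range N,
      ∑ j ∈ Finset.range N, (if j ≤ i then c ^ (i - j) else 0) ≤ 7/2 := by
    intro i hi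
    rw [Finset.sum_ite, Finset.sum_const, smul_zero, add_zero]
    have hfe : (Finset.range N).filter (fun j => j ≤ i) = Finset.range (i + 1) := by
      ext j
      simp only [Finset.mem_filter, Finset.mem_range] at *
      omega
    rw [hfe]
    rw [show ∑ j ∈ Finset.range (i+1), c ^ (i - j)
        = ∑ j ∈ Finset.range (i+1), c ^ (i + 1 - 1 - j) from by
          apply Finset.sum_congr rfl; intro j hj; norm_num]
    rw [Finset.sum_range_reflect (fun k => c ^ k) (i + 1)]
    exact geom_bound (i + 1)
  have hgeo2 : ∀ j,
      ∑ i ∈ Finset.range N, (if j ≤ i then c ^ (i - j) else 0) ≤ 7/2 := by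
    intro j
    rw [Finset.sum_ite, Finset.sum_const, smul_zero, add_zero]
    have hfe : (Finset.range N).filter (fun i => j ≤ i) = Finset.Ico j N := by
      ext i
      simp only [Finset.mem_filter, Finset.mem_range, Finset.mem_Ico]
      omega
    rw [hfe, Finset.sum_Ico_eq_sum_range]
    rw [show ∑ k ∈ Finset.range (N - j), c ^ (j + k - j)
        = ∑ k ∈ Finset.range (N - j), c ^ k from by
          apply Finset.sum_congr rfl; intro k hk; congr 1; omega]
    exact geom_bound (N - j)
  have hA : ∑ i ∈ Finset.range N, ∑ j ∈ Finset.range N,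
      (if j ≤ i then (2:ℝ) ^ i * n i * c ^ (i - j) / 2 else 0)
      ≤ 7/4 * ∑ i ∈ Finset.range N, (2:ℝ) ^ i * n i := by
    calc ∑ i ∈ Finset.range N, ∑ j ∈ Finset.range N,
          (if j ≤ i then (2:ℝ) ^ i * n i * c ^ (i - j) / 2 else 0)
        = ∑ i ∈ Finset.range N, (2:ℝ) ^ i * n i / 2 *
            ∑ j ∈ Finset.range N, (if j ≤ i then c ^ (i - j) else 0) := by
          apply Finset.sum_congr rfl; intro i _
          rw [Finset.mul_sum]
          apply Finset.sum_congr rfl; intro j _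
          split_ifs with h <;> ring
      _ ≤ ∑ i ∈ Finset.range N, (2:ℝ) ^ i * n i / 2 * (7/2) := by
          refine Finset.sum_le_sum fun i hi => ?_
          have hni := hn0 i
          exact mul_le_mul_of_nonneg_left (hgeo1 i hi) (by positivity)
      _ = 7/4 * ∑ i ∈ Finset.range N, (2:ℝ) ^ i * n i := by
          rw [Finset.mul_sum]
          apply Finset.sum_congr rfl; intro i _; ring
  have hB : ∑ i ∈ Finset.range N, ∑ j ∈ Finset.range N,
      (if j ≤ i then (2:ℝ) ^ j * n j * c ^ (i - j) / 2 else 0)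
      ≤ 7/4 * ∑ i ∈ Finset.range N, (2:ℝ) ^ i * n i := by
    rw [Finset.sum_comm]
    calc ∑ j ∈ Finset.range N, ∑ i ∈ Finset.range N,
          (if j ≤ i then (2:ℝ) ^ j * n j * c ^ (i - j) / 2 else 0)
        = ∑ j ∈ Finset.range N, (2:ℝ) ^ j * n j / 2 *
            ∑ i ∈ Finset.range N, (if j ≤ i then c ^ (i - j) else 0) := by
          apply Finset.sum_congr rfl; intro j _
          rw [Finset.mul_sum]
          apply Finset.sum_congr rfl; intro i _
          split_ifs with h <;> ring
      _ ≤ ∑ j ∈ Finset.range N, (2:ℝ) ^ j * n j / 2 * (7/2) := by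
          refine Finset.sum_le_sum fun j _ => ?_
          have hnj := hn0 j
          exact mul_le_mul_of_nonneg_left (hgeo2 j) (by positivity)
      _ = 7/4 * ∑ j ∈ Finset.range N, (2:ℝ) ^ j * n j := by
          rw [Finset.mul_sum]
          apply Finset.sum_congr rfl; intro j _; ring
  have hsplit : ∑ i ∈ Finset.range N, ∑ j ∈ Finset.range N,
        ((if j ≤ i then (2:ℝ) ^ i * n i * c ^ (i - j) / 2 else 0)
          + (if j ≤ i then (2:ℝ) ^ j * n j * c ^ (i - j) / 2 else 0))
      = (∑ i ∈ Finset.range N, ∑ j ∈ Finset.range N,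
          (if j ≤ i then (2:ℝ) ^ i * n i * c ^ (i - j) / 2 else 0))
        + ∑ i ∈ Finset.range N, ∑ j ∈ Finset.range N,
          (if j ≤ i then (2:ℝ) ^ j * n j * c ^ (i - j) / 2 else 0) := by
    simp only [Finset.sum_add_distrib]
  rw [hsplit]
  linarith

noncomputable def dyadicClass {V : Type*} [Fintype V] [DecidableEq V]
    (G : SimpleGraph V) [DecidableRel G.Adj] (i : ℕ) : Finset V :=
  Finset.univ.filter (fun v : V =>
    (2 : ℝ) ^ ((i : ℤ) - 1) < (G.degree v : ℝ) ∧ (G.degree v : ℝ) ≤ (2 : ℝ) ^ (i : ℕ))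

lemma dyadicClass_empty {V : Type*} [Fintype V] [DecidableEq V]
    (G : SimpleGraph V) [DecidableRel G.Adj] (i : ℕ) (hi : Fintype.card V + 1 ≤ i) :
    dyadicClass G i = ∅ := by
  rw [Finset.eq_empty_iff_forall_notMem]
  intro v hv
  rw [dyadicClass, Finset.mem_filter] at hv
  obtain ⟨-, hlt, -⟩ := hv
  have h1 : (G.degree v : ℝ) < (Fintype.card V : ℝ) := by
    exact_mod_cast G.degree_lt_card_verts v
  have h2 : (Fintype.card V : ℝ) ≤ (2 : ℝ) ^ ((Fintype.card V : ℤ)) := by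
    rw [zpow_natCast]
    exact_mod_cast (Nat.lt_two_pow_self (n := Fintype.card V)).le
  have h3 : (2 : ℝ) ^ ((Fintype.card V : ℤ)) ≤ (2 : ℝ) ^ ((i : ℤ) - 1) := by
    apply zpow_le_zpow_right₀ (by norm_num)
    omega
  linarith

lemma dyadicClass_disjoint {V : Type*} [Fintype V] [DecidableEq V]
    (G : SimpleGraph V) [DecidableRel G.Adj] {i j : ℕ} (hij : i < j) :
    Disjoint (dyadicClass G i) (dyadicClass G j) := by
  rw [Finset.disjoint_left]
  intro v hvi hvj
  rw [dyadicClass, Finset.mem_filter] at hvi hvj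
  obtain ⟨-, -, hle⟩ := hvi
  obtain ⟨-, hlt, -⟩ := hvj
  have h1 : (2 : ℝ) ^ (i : ℕ) = (2 : ℝ) ^ ((i : ℤ)) := by rw [zpow_natCast]
  have h2 : (2 : ℝ) ^ ((i : ℤ)) ≤ (2 : ℝ) ^ ((j : ℤ) - 1) := by
    apply zpow_le_zpow_right₀ (by norm_num)
    omega
  rw [h1] at hle
  linarith

lemma dyadic_deg_sum {V : Type*} [Fintype V] [DecidableEq V]
    (G : SimpleGraph V) [DecidableRel G.Adj] :
    ∑ i ∈ Finset.range (Fintype.card V + 1),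
        (2 : ℝ) ^ i * ((dyadicClass G i).card : ℝ) ≤ 4 * (G.edgeFinset.card : ℝ) := by
  have hstep : ∀ i : ℕ, (2 : ℝ) ^ i * ((dyadicClass G i).card : ℝ)
      ≤ 2 * ∑ v ∈ dyadicClass G i, (G.degree v : ℝ) := by
    intro i
    have hb : ∀ v ∈ dyadicClass G i, (2 : ℝ) ^ ((i : ℤ) - 1) ≤ (G.degree v : ℝ) := by
      intro v hv
      rw [dyadicClass, Finset.mem_filter] at hv
      exact hv.2.1.le
    have hcard := Finset.card_nsmul_le_sum (dyadicClass G i)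
      (fun v => (G.degree v : ℝ)) ((2 : ℝ) ^ ((i : ℤ) - 1)) hb
    rw [nsmul_eq_mul] at hcard
    have hpow : (2 : ℝ) ^ (i : ℕ) = 2 * (2 : ℝ) ^ ((i : ℤ) - 1) := by
      rw [← zpow_natCast (2:ℝ) i, show (i : ℤ) = ((i : ℤ) - 1) + 1 from by ring,
        zpow_add₀ (two_ne_zero) , zpow_one]
      ring
    rw [hpow]
    calc 2 * (2 : ℝ) ^ ((i : ℤ) - 1) * ((dyadicClass G i).card : ℝ)
        = 2 * (((dyadicClass G i).card : ℝ) * (2 : ℝ) ^ ((i : ℤ) - 1)) := by ring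
      _ ≤ 2 * ∑ v ∈ dyadicClass G i, (G.degree v : ℝ) := by linarith
  have hdisj : (↑(Finset.range (Fintype.card V + 1)) : Set ℕ).PairwiseDisjoint
      (fun i => dyadicClass G i) := by
    intro i _ j _ hij
    rcases lt_or_gt_of_ne hij with h | h
    · exact dyadicClass_disjoint G h
    · exact (dyadicClass_disjoint G h).symm
  have hunion : ∑ i ∈ Finset.range (Fintype.card V + 1), ∑ v ∈ dyadicClass G i, (G.degree v : ℝ)
      ≤ ∑ v : V, (G.degree v : ℝ) := by
    rw [← Finset.sum_biUnion hdisj]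
    apply Finset.sum_le_sum_of_subset_of_nonneg
    · exact Finset.subset_univ _
    · intro v _ _
      positivity
  have hdeg : ∑ v : V, (G.degree v : ℝ) = 2 * (G.edgeFinset.card : ℝ) := by
    exact_mod_cast congrArg (Nat.cast : ℕ → ℝ) G.sum_degrees_eq_twice_card_edges
  calc ∑ i ∈ Finset.range (Fintype.card V + 1), (2 : ℝ) ^ i * ((dyadicClass G i).card : ℝ)
      ≤ ∑ i ∈ Finset.range (Fintype.card V + 1),
          2 * ∑ v ∈ dyadicClass G i, (G.degree v : ℝ) :=
        Finset.sum_le_sum fun i _ => hstep i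
    _ = 2 * ∑ i ∈ Finset.range (Fintype.card V + 1), ∑ v ∈ dyadicClass G i, (G.degree v : ℝ) := by
        rw [Finset.mul_sum]
    _ ≤ 2 * (2 * (G.edgeFinset.card : ℝ)) := by rw [← hdeg]; linarith
    _ = 4 * (G.edgeFinset.card : ℝ) := by ring

theorem dyadic_degree_sum_bound {V : Type*} [Fintype V] [DecidableEq V]
    (G : SimpleGraph V) [DecidableRel G.Adj] :
    ∑' i : ℕ, ∑' j : ℕ,
        (if j ≤ i then
          (2 : ℝ) ^ j *
            Real.sqrt
              (((Finset.univ.filter (fun v : V =>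
                  (2 : ℝ) ^ ((i : ℤ) - 1) < (G.degree v : ℝ) ∧
                    (G.degree v : ℝ) ≤ (2 : ℝ) ^ (i : ℕ))).card : ℝ) *
               ((Finset.univ.filter (fun v : V =>
                  (2 : ℝ) ^ ((j : ℤ) - 1) < (G.degree v : ℝ) ∧
                    (G.degree v : ℝ) ≤ (2 : ℝ) ^ (j : ℕ))).card : ℝ))
        else 0)
      ≤ 14 * (G.edgeFinset.card : ℝ) := by
  have h14 : (14 : ℝ) * (G.edgeFinset.card : ℝ) = 14 * (G.edgeFinset.card : ℝ) := rfl
  exact main_bound (fun i => ((dyadicClass G i).card : ℝ))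
    (fun i => by positivity)
    (Fintype.card V + 1)
    (G.edgeFinset.card : ℝ)
    (fun i hi => by show ((dyadicClass G i).card : ℝ) = 0; rw [dyadicClass_empty G i hi]; simp)
    (dyadic_deg_sum G)
end

section
/- Let G be a simple undirected graph on n vertices with adjacency matrix X_G, and let A be a subset of the vertices of G. For each integer i ≥ 0 let B_i be the set of vertices v of G whose number of neighbours in A lies in (2^{i−1}, 2^i]. Then ‖X_G · 𝟙_A‖_◦ ≤ 2 · Σ_{i ≥ 0} 2^i · √|B_i|, where 𝟙_A ∈ ℝ^n is the indicator vector of A. -/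
open MeasureTheory

lemma sqrt_sum_le' {ι : Type*} (s : Finset ι) (f : ι → ℝ) (hf : ∀ i ∈ s, 0 ≤ f i) :
    Real.sqrt (∑ i ∈ s, f i) ≤ ∑ i ∈ s, Real.sqrt (f i) := by
  induction s using Finset.cons_induction with
  | empty => simp
  | cons a s ha ih =>
    rw [Finset.sum_cons, Finset.sum_cons]
    have h1 : 0 ≤ f a := hf a (Finset.mem_cons_self a s)
    have h2 : 0 ≤ ∑ i ∈ s, f i :=
      Finset.sum_nonneg (fun i hi => hf i (Finset.mem_cons_of_mem hi))
    have key : Real.sqrt (f a + ∑ i ∈ s, f i)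
        ≤ Real.sqrt (f a) + Real.sqrt (∑ i ∈ s, f i) := by
      have hle : f a + ∑ i ∈ s, f i ≤ (Real.sqrt (f a) + Real.sqrt (∑ i ∈ s, f i)) ^ 2 := by
        nlinarith [Real.sq_sqrt h1, Real.sq_sqrt h2, Real.sqrt_nonneg (f a),
          Real.sqrt_nonneg (∑ i ∈ s, f i),
          mul_nonneg (Real.sqrt_nonneg (f a)) (Real.sqrt_nonneg (∑ i ∈ s, f i))]
      calc Real.sqrt (f a + ∑ i ∈ s, f i)
          ≤ Real.sqrt ((Real.sqrt (f a) + Real.sqrt (∑ i ∈ s, f i)) ^ 2) :=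
            Real.sqrt_le_sqrt hle
        _ = _ := Real.sqrt_sq (by positivity)
    exact key.trans (by linarith [ih (fun i hi => hf i (Finset.mem_cons_of_mem hi))])

theorem circNorm_adjMatrix_indicator_bound {n : ℕ} (G : SimpleGraph (Fin n))
    [DecidableRel G.Adj] (A : Finset (Fin n)) :
    circNorm ((G.adjMatrix ℝ).mulVec (fun i => if i ∈ A then (1 : ℝ) else 0)) ≤
      2 * ∑' i : ℕ,
        (2 : ℝ) ^ (i : ℕ) *
          Real.sqrt ((Finset.univ.filter (fun v : Fin n =>
            (2 : ℝ) ^ ((i : ℤ) - 1) < ((A.filter (fun a => G.Adj v a)).card : ℝ) ∧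
              ((A.filter (fun a => G.Adj v a)).card : ℝ) ≤ (2 : ℝ) ^ (i : ℕ))).card : ℝ) := by
  classical
  let b : ℕ → Finset (Fin n) := fun k => Finset.univ.filter (fun v : Fin n =>
    (2 : ℝ) ^ ((k : ℤ) - 1) < ((A.filter (fun a => G.Adj v a)).card : ℝ) ∧
      ((A.filter (fun a => G.Adj v a)).card : ℝ) ≤ (2 : ℝ) ^ (k : ℕ))
  show circNorm _ ≤ 2 * ∑' i : ℕ, (2 : ℝ) ^ (i : ℕ) * Real.sqrt (((b i).card : ℝ))
  have hmul : (G.adjMatrix ℝ).mulVec (fun i => if i ∈ A then (1:ℝ) else 0) =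
      fun i => ((A.filter (fun a => G.Adj i a)).card : ℝ) := by
    funext i
    simp [Matrix.mulVec, dotProduct, SimpleGraph.adjMatrix_apply, ite_and, mul_ite]
  rw [hmul]
  -- degrees are at most n
  have hdn : ∀ v : Fin n, (A.filter (fun a => G.Adj v a)).card ≤ n := fun v =>
    le_trans (Finset.card_filter_le _ _) (le_trans (Finset.card_le_univ A) (by simp))
  -- b k is empty for k > n
  have hbempty : ∀ k : ℕ, n < k → b k = ∅ := by
    intro k hk
    rw [Finset.filter_eq_empty_iff]
    rintro v - ⟨h1, h2⟩
    have h3 : ((A.filter (fun a => G.Adj v a)).card : ℝ) ≤ (2:ℝ) ^ ((n:ℤ)) := by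
      rw [zpow_natCast]
      calc ((A.filter (fun a => G.Adj v a)).card : ℝ) ≤ (n : ℝ) := by exact_mod_cast hdn v
        _ ≤ 2 ^ n := by exact_mod_cast (Nat.lt_two_pow_self).le
    have h4 : (k : ℤ) - 1 < (n : ℤ) :=
      (zpow_lt_zpow_iff_right₀ (by norm_num : (1:ℝ) < 2)).mp (lt_of_lt_of_le h1 h3)
    omega
  -- the majorant g
  set g : ℝ → ℝ := fun x => ∑ k ∈ Finset.range (n+1),
    Set.indicator (Set.Ioc (0:ℝ) ((2:ℝ)^k)) (fun _ => Real.sqrt (((b k).card : ℝ))) x with hg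
  have hint_piece : ∀ k : ℕ, Integrable
      (fun x => Set.indicator (Set.Ioc (0:ℝ) ((2:ℝ)^k))
        (fun _ => Real.sqrt (((b k).card : ℝ))) x) (volume.restrict (Set.Ioi (0:ℝ))) := by
    intro k
    rw [integrable_indicator_iff measurableSet_Ioc]
    refine (integrableOn_const_iff).mpr (Or.inr ?_)
    refine lt_of_le_of_lt (Measure.restrict_apply_le _ _) ?_
    exact measure_Ioc_lt_top
  have hgint : Integrable g (volume.restrict (Set.Ioi (0:ℝ))) :=
    integrable_finset_sum _ (fun k _ => hint_piece k)
  -- pointwise bound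
  have hle : ∀ x ∈ Set.Ioi (0:ℝ),
      Real.sqrt (((Finset.univ.filter (fun i : Fin n =>
        x ≤ |((A.filter (fun a => G.Adj i a)).card : ℝ)|)).card : ℝ)) ≤ g x := by
    intro x hx
    have hx0 : (0:ℝ) < x := hx
    set S := Finset.univ.filter (fun i : Fin n =>
      x ≤ |((A.filter (fun a => G.Adj i a)).card : ℝ)|) with hS
    set T := (Finset.range (n+1)).filter (fun k => x ≤ (2:ℝ)^k) with hT
    have hsub : S ⊆ T.biUnion b := by
      intro i hi
      rw [hS, Finset.mem_filter] at hi
      have hi' : x ≤ ((A.filter (fun a => G.Adj i a)).card : ℝ) := by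
        have := hi.2
        rwa [abs_of_nonneg (by positivity)] at this
      set dv := (A.filter (fun a => G.Adj i a)).card with hdv
      have hd1 : 1 ≤ dv := by
        by_contra h
        push_neg at h
        interval_cases dv
        simp at hi'
        linarith
      set k := Nat.clog 2 dv with hk
      have hk2 : dv ≤ 2^k := Nat.le_pow_clog one_lt_two dv
      have hk2' : (dv : ℝ) ≤ (2:ℝ)^k := by exact_mod_cast hk2
      have hklow : (2:ℝ) ^ ((k:ℤ) - 1) < (dv : ℝ) := by
        rcases eq_or_lt_of_le hd1 with h1 | h1
        · have hk0 : k = 0 := by rw [hk, ← h1]; simp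
          rw [hk0, ← h1]
          norm_num
        · have hlt := Nat.pow_pred_clog_lt_self one_lt_two h1
          have hk1 : 1 ≤ k := by
            by_contra hc
            push_neg at hc
            interval_cases k
            simp at hk2
            omega
          have : ((k:ℤ) - 1) = ((k - 1 : ℕ) : ℤ) := by omega
          rw [this, zpow_natCast]
          exact_mod_cast hlt
      have hkn : k ≤ n := by
        rw [hk]
        calc Nat.clog 2 dv ≤ Nat.clog 2 (2 ^ n) :=
          Nat.clog_mono_right 2 (le_trans (hdn i) (Nat.lt_two_pow_self).le)
        _ = n := Nat.clog_pow 2 n one_lt_two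
      have hxk : x ≤ (2:ℝ)^k := le_trans hi' hk2'
      refine Finset.mem_biUnion.mpr ⟨k, ?_, ?_⟩
      · rw [hT, Finset.mem_filter, Finset.mem_range]
        exact ⟨Nat.lt_succ_of_le hkn, hxk⟩
      · simp only [b, Finset.mem_filter, Finset.mem_univ, true_and]
        exact ⟨hklow, hk2'⟩
    have hcard : ((S.card : ℝ)) ≤ ∑ k ∈ T, (((b k).card : ℝ)) := by
      exact_mod_cast le_trans (Finset.card_le_card hsub) Finset.card_biUnion_le
    calc Real.sqrt ((S.card : ℝ)) ≤ Real.sqrt (∑ k ∈ T, (((b k).card : ℝ))) :=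
        Real.sqrt_le_sqrt hcard
      _ ≤ ∑ k ∈ T, Real.sqrt (((b k).card : ℝ)) :=
        sqrt_sum_le' _ _ (fun k _ => Nat.cast_nonneg _)
      _ = g x := by
        rw [hg, hT, Finset.sum_filter]
        refine Finset.sum_congr rfl (fun k _ => ?_)
        rw [Set.indicator_apply]
        simp only [Set.mem_Ioc, hx0, true_and]
  -- the integral bound
  have hmono : circNorm (fun i => ((A.filter (fun a => G.Adj i a)).card : ℝ)) ≤
      ∫ x in Set.Ioi (0:ℝ), g x := by
    rw [circNorm]
    refine integral_mono_of_nonneg ?_ hgint ?_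
    · filter_upwards with x
      exact Real.sqrt_nonneg _
    · rw [Filter.EventuallyLE, ae_restrict_iff' measurableSet_Ioi]
      filter_upwards with x hx
      exact hle x hx
  -- computing ∫ g
  have hgval : ∫ x in Set.Ioi (0:ℝ), g x =
      ∑ k ∈ Finset.range (n+1), (2:ℝ)^k * Real.sqrt (((b k).card : ℝ)) := by
    rw [hg, integral_finset_sum _ (fun k _ => hint_piece k)]
    refine Finset.sum_congr rfl (fun k _ => ?_)
    rw [setIntegral_indicator measurableSet_Ioc,
      Set.inter_eq_self_of_subset_right Set.Ioc_subset_Ioi_self, setIntegral_const,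
      Real.volume_real_Ioc, smul_eq_mul, sub_zero, max_eq_left (by positivity)]
  -- the RHS tsum equals the finite sum
  have hzero : ∀ k ∉ Finset.range (n+1),
      (2:ℝ)^(k:ℕ) * Real.sqrt (((b k).card : ℝ)) = 0 := by
    intro k hk
    rw [Finset.mem_range, not_lt] at hk
    rw [hbempty k (by omega)]
    simp
  have htsum : ∑' i : ℕ, (2:ℝ)^(i:ℕ) * Real.sqrt (((b i).card : ℝ)) =
      ∑ k ∈ Finset.range (n+1), (2:ℝ)^k * Real.sqrt (((b k).card : ℝ)) :=
    tsum_eq_sum hzero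
  have hsnn : 0 ≤ ∑ k ∈ Finset.range (n+1), (2:ℝ)^k * Real.sqrt (((b k).card : ℝ)) :=
    Finset.sum_nonneg (fun k _ => mul_nonneg (by positivity) (Real.sqrt_nonneg _))
  rw [htsum]
  calc circNorm _ ≤ ∫ x in Set.Ioi (0:ℝ), g x := hmono
    _ = _ := hgval
    _ ≤ 2 * _ := by linarith
end
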